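/- arXiv:1709.08589 — 2 statements merged into one kernel-verified Lean document; each statement's English description precedes it below -/
import Mathlib

section
/- Let w be an involution in a Weyl group W with simple reflections S. Then either (i) there exists s ∈ S with ℓ(sw) < ℓ(w) and sw ≠ ws, or (ii) there is a subset J ⊆ S such that w is the longest element of the standard parabolic subgroup W_J and w lies in the center of W_J. -/
namespace CoxRich

open CoxeterSystem List Classical

noncomputable section
attribute [local instance] Classical.propDecidable

variable {B : Type*} {W : Type*} [Group W] {M : CoxeterMatrix B} (cs : CoxeterSystem M W)

local prefix:100 "σ" => cs.simple
local prefix:100 "π" => cs.wordProd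
local prefix:100 "ℓ" => cs.length

/-- The basic sign-flipping function on `W × ℤˣ`. -/
def eFun (i : B) : W × ℤˣ → W × ℤˣ :=
  fun q => (σ i * q.1 * σ i, (if q.1 = σ i then -1 else 1) * q.2)

lemma conj_simple_simple (i : B) (t : W) : σ i * (σ i * t * σ i) * σ i = t := by
  have h : σ i * (σ i * t * σ i) * σ i = (σ i * σ i) * t * (σ i * σ i) := by group
  rw [h, cs.simple_mul_simple_self, one_mul, mul_one]

lemma conj_simple_eq_simple_iff (i : B) (t : W) :
    σ i * t * σ i = σ i ↔ t = σ i := by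
  constructor
  · intro h
    have h2 := congrArg (fun x => σ i * x * σ i) h
    rw [conj_simple_simple] at h2
    rw [h2]
    have : σ i * σ i * σ i = 1 * σ i := by rw [cs.simple_mul_simple_self]
    rw [this, one_mul]
  · rintro rfl
    rw [cs.simple_mul_simple_self, one_mul]

lemma eFun_involutive (i : B) : Function.Involutive (eFun cs i) := by
  rintro ⟨t, ε⟩
  show eFun cs i (eFun cs i (t, ε)) = (t, ε)
  unfold eFun
  simp only
  rw [conj_simple_simple, conj_simple_eq_simple_iff]
  by_cases h : t = σ i <;> simp [h]

/-- The permutation attached to a simple reflection. -/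
def eP (i : B) : Equiv.Perm (W × ℤˣ) := (eFun_involutive cs i).toPerm

lemma eP_apply (i : B) (t : W) (ε : ℤˣ) :
    eP cs i (t, ε) = (σ i * t * σ i, (if t = σ i then -1 else 1) * ε) := rfl


lemma conj_eq_iff (u a b : W) : u * a * u⁻¹ = b ↔ a = u⁻¹ * b * u := by
  constructor
  · rintro rfl; group
  · rintro rfl; group

lemma r_succ_succ (i j : B) (n : ℕ) :
    (σ j * σ i) * ((σ j * σ i) ^ n * σ j) * (σ i * σ j) = (σ j * σ i) ^ (n + 2) * σ j := by
  have h : ((σ j * σ i) ^ (n + 2) : W) = (σ j * σ i) * (σ j * σ i) ^ n * (σ j * σ i) := by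
    rw [pow_succ, pow_succ']
  rw [h]
  group

lemma eP_mul_pow_apply (i j : B) (k : ℕ) (t : W) (ε : ℤˣ) :
    ((eP cs i * eP cs j) ^ k) (t, ε) =
      ((σ i * σ j) ^ k * t * ((σ i * σ j) ^ k)⁻¹,
        (∏ n ∈ Finset.range (2 * k),
          (if t = (σ j * σ i) ^ n * σ j then (-1 : ℤˣ) else 1)) * ε) := by
  have huinv : ((σ i * σ j : W))⁻¹ = σ j * σ i := by
    rw [mul_inv_rev, cs.inv_simple, cs.inv_simple]
  induction k generalizing t ε with
  | zero => simp
  | succ k ih =>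
    rw [pow_succ, Equiv.Perm.mul_apply, Equiv.Perm.mul_apply, eP_apply]
    rw [eP_apply]
    rw [ih]
    dsimp only
    rw [Prod.mk.injEq]
    have hconj : σ i * (σ j * t * σ j) * σ i = (σ i * σ j) * t * ((σ i * σ j))⁻¹ := by
      rw [huinv]; group
    refine ⟨?_, ?_⟩
    · rw [hconj, huinv, pow_succ, mul_inv_rev, huinv]
      group
    · have hcond : ∀ n : ℕ, (σ i * (σ j * t * σ j) * σ i = (σ j * σ i) ^ n * σ j) ↔
          (t = (σ j * σ i) ^ (n + 2) * σ j) := by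
        intro n
        rw [hconj, conj_eq_iff, huinv, r_succ_succ]
      have hcond1 : (σ j * t * σ j = σ i) ↔ (t = (σ j * σ i) ^ 1 * σ j) := by
        have h1 : σ j * t * σ j = σ j * t * (σ j)⁻¹ := by rw [cs.inv_simple]
        rw [h1, conj_eq_iff, cs.inv_simple, pow_one]
      have hcond0 : (t = σ j) ↔ (t = (σ j * σ i) ^ 0 * σ j) := by rw [pow_zero, one_mul]
      simp only [hcond, hcond1, hcond0]
      have key : (∏ n ∈ Finset.range (2 * (k+1)),
          (if t = (σ j * σ i) ^ n * σ j then (-1 : ℤˣ) else 1)) =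
          ((∏ n ∈ Finset.range (2 * k),
            (if t = (σ j * σ i) ^ (n + 2) * σ j then (-1 : ℤˣ) else 1)) *
            (if t = (σ j * σ i) ^ 1 * σ j then (-1 : ℤˣ) else 1)) *
            (if t = (σ j * σ i) ^ 0 * σ j then (-1 : ℤˣ) else 1) := by
        rw [show 2 * (k + 1) = 2 * k + 1 + 1 by ring, Finset.prod_range_succ',
          Finset.prod_range_succ']
      rw [key]
      group

lemma eP_liftable : M.IsLiftable (eP cs) := by
  intro i j
  apply Equiv.ext
  rintro ⟨t, ε⟩
  have hr : ∀ n : ℕ, ((σ j * σ i) ^ (M.M i j + n) * σ j : W) = (σ j * σ i) ^ n * σ j := by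
    intro n
    rw [pow_add, cs.simple_mul_simple_pow', one_mul]
  have hsplit : (∏ n ∈ Finset.range (2 * M.M i j),
      (if t = (σ j * σ i) ^ n * σ j then (-1 : ℤˣ) else 1)) = 1 := by
    have h2 : 2 * M.M i j = M.M i j + M.M i j := by ring
    rw [h2, Finset.prod_range_add]
    have h3 : (∏ n ∈ Finset.range (M.M i j),
        (if t = (σ j * σ i) ^ (M.M i j + n) * σ j then (-1 : ℤˣ) else 1)) =
        ∏ n ∈ Finset.range (M.M i j),
        (if t = (σ j * σ i) ^ n * σ j then (-1 : ℤˣ) else 1) := by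
      apply Finset.prod_congr rfl
      intro n _
      rw [hr n]
    rw [h3, Int.units_mul_self]
  show ((eP cs i * eP cs j) ^ M.M i j) (t, ε) = (t, ε)
  rw [eP_mul_pow_apply, cs.simple_mul_simple_pow, hsplit, one_mul, inv_one, mul_one, one_mul]

/-- The reflection-sign representation. -/
def phi : W →* Equiv.Perm (W × ℤˣ) := cs.lift ⟨eP cs, eP_liftable cs⟩

lemma phi_simple (i : B) : phi cs (σ i) = eP cs i := cs.lift_apply_simple (eP_liftable cs) i

/-- The sign of `t` in `w` (right inversion indicator). -/
def sg (w t : W) : ℤˣ := ((phi cs w) (t, 1)).2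

lemma phi_wordProd (ω : List B) (t : W) (ε : ℤˣ) :
    phi cs (π ω) (t, ε) =
      (π ω * t * (π ω)⁻¹, ((-1 : ℤˣ) ^ (List.count t (cs.rightInvSeq ω))) * ε) := by
  induction ω generalizing t ε with
  | nil => simp
  | cons i ω ih =>
    rw [cs.wordProd_cons, map_mul, Equiv.Perm.mul_apply, ih, phi_simple, eP_apply]
    rw [Prod.mk.injEq]
    constructor
    · rw [mul_inv_rev, cs.inv_simple]
      group
    · have hris : cs.rightInvSeq (i :: ω) = ((π ω)⁻¹ * σ i * π ω) :: cs.rightInvSeq ω := rfl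
      rw [hris]
      have hcond : (π ω * t * (π ω)⁻¹ = σ i) ↔ (t = (π ω)⁻¹ * σ i * π ω) :=
        conj_eq_iff (π ω) t (σ i)
      by_cases h : t = (π ω)⁻¹ * σ i * π ω
      · simp only [List.count_cons, beq_iff_eq, if_pos (hcond.mpr h), if_pos h.symm, pow_add,
          pow_one]
        group
      · simp only [List.count_cons, beq_iff_eq]
        rw [if_neg (fun hc => h (hcond.mp hc)), if_neg (fun hc => h hc.symm), add_zero, one_mul]

lemma phi_apply_sg (w t : W) (ε : ℤˣ) : phi cs w (t, ε) = (w * t * w⁻¹, sg cs w t * ε) := by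
  obtain ⟨ω, rfl⟩ := cs.wordProd_surjective w
  rw [phi_wordProd]
  have h2 : sg cs (π ω) t = ((-1 : ℤˣ) ^ (List.count t (cs.rightInvSeq ω))) := by
    rw [sg, phi_wordProd, mul_one]
  rw [h2]

lemma sg_count (ω : List B) (t : W) :
    sg cs (π ω) t = (-1 : ℤˣ) ^ (List.count t (cs.rightInvSeq ω)) := by
  rw [sg, phi_wordProd, mul_one]

lemma sg_mul (a b t : W) : sg cs (a * b) t = sg cs a (b * t * b⁻¹) * sg cs b t := by
  have h : phi cs (a * b) (t, 1) = phi cs a (phi cs b (t, 1)) := by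
    rw [map_mul, Equiv.Perm.mul_apply]
  rw [sg, h, phi_apply_sg, phi_apply_sg, mul_one]

lemma sg_simple (i : B) (t : W) : sg cs (σ i) t = if t = σ i then -1 else 1 := by
  rw [sg, phi_simple, eP_apply, mul_one]

lemma sg_one (t : W) : sg cs 1 t = 1 := by
  rw [sg, map_one]
  rfl

lemma sg_inv_cancel (z t : W) : sg cs z⁻¹ (z * t * z⁻¹) * sg cs z t = 1 := by
  rw [← sg_mul, inv_mul_cancel, sg_one]

lemma sg_refl_self {t : W} (ht : cs.IsReflection t) : sg cs t t = -1 := by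
  obtain ⟨z, i, rfl⟩ := ht
  have h1 : sg cs (z * σ i * z⁻¹) (z * σ i * z⁻¹)
      = sg cs (z * σ i) (z⁻¹ * (z * σ i * z⁻¹) * z⁻¹⁻¹) * sg cs z⁻¹ (z * σ i * z⁻¹) := by
    rw [← sg_mul]
  have h2 : z⁻¹ * (z * σ i * z⁻¹) * z⁻¹⁻¹ = σ i := by group
  have h3 : sg cs (z * σ i) (σ i) = sg cs z (σ i * σ i * (σ i)⁻¹) * sg cs (σ i) (σ i) := by
    rw [← sg_mul]
  have h4 : σ i * σ i * (σ i)⁻¹ = σ i := by group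
  have h5 : sg cs (σ i) (σ i) = -1 := by rw [sg_simple, if_pos rfl]
  have h6 : sg cs z⁻¹ (z * σ i * z⁻¹) = (sg cs z (σ i))⁻¹ := by
    have := sg_inv_cancel cs z (σ i)
    exact eq_inv_of_mul_eq_one_left this
  rw [h1, h2, h3, h4, h5, h6, mul_comm (sg cs z (σ i)) (-1 : ℤˣ), mul_assoc, mul_inv_cancel,
    mul_one]

lemma length_mul_lt_of_sg_neg (w t : W) (h : sg cs w t = -1) : ℓ (w * t) < ℓ w := by
  obtain ⟨ω, hred, rfl⟩ := cs.exists_reduced_word' w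
  have hodd : Odd (List.count t (cs.rightInvSeq ω)) := by
    rcases Nat.even_or_odd (List.count t (cs.rightInvSeq ω)) with he | ho
    · rw [sg_count, he.neg_one_pow] at h
      exact absurd h (by decide)
    · exact ho
  have hmem : t ∈ cs.rightInvSeq ω := by
    rcases hodd with ⟨c, hc⟩
    have : 0 < List.count t (cs.rightInvSeq ω) := by omega
    exact List.count_pos_iff.mp this
  obtain ⟨jj, hjj, hget⟩ := List.mem_iff_getElem.mp hmem
  have hjl : jj < ω.length := by
    rw [cs.length_rightInvSeq] at hjj
    exact hjj
  have heq : π ω * t = π (ω.eraseIdx jj) := by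
    rw [← hget, ← List.getD_eq_getElem _ 1 hjj, cs.wordProd_mul_getD_rightInvSeq]
  rw [heq]
  calc ℓ (π (ω.eraseIdx jj)) ≤ (ω.eraseIdx jj).length := cs.length_wordProd_le _
    _ < ω.length := by
        have := List.length_eraseIdx_add_one hjl
        omega
    _ = ℓ (π ω) := hred.symm

lemma sg_eq_neg_one_iff {t : W} (ht : cs.IsReflection t) (w : W) :
    sg cs w t = -1 ↔ ℓ (w * t) < ℓ w := by
  constructor
  · exact length_mul_lt_of_sg_neg cs w t
  · intro hlt
    rcases Int.units_eq_one_or (sg cs (w * t) t) with h1 | h1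
    · have h2 : sg cs ((w * t) * t) t = sg cs (w * t) (t * t * t⁻¹) * sg cs t t := sg_mul cs _ _ _
      have h3 : (w * t) * t = w := by rw [mul_assoc, ht.mul_self, mul_one]
      have h4 : t * t * t⁻¹ = t := by group
      rw [h3, h4, h1, sg_refl_self cs ht, one_mul] at h2
      exact h2
    · exfalso
      have := length_mul_lt_of_sg_neg cs (w * t) t h1
      have h3 : (w * t) * t = w := by rw [mul_assoc, ht.mul_self, mul_one]
      rw [h3] at this
      omega

section Finite

variable [Finite W]

/-- The finset of right inversions. -/
def invf (w : W) : Finset W :=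
  haveI := Fintype.ofFinite W
  Finset.univ.filter (fun t => cs.IsReflection t ∧ sg cs w t = -1)

lemma mem_invf {w t : W} : t ∈ invf cs w ↔ cs.IsReflection t ∧ sg cs w t = -1 := by
  letI := Fintype.ofFinite W
  simp [invf]

lemma invf_eq_toFinset {ω : List B} (hred : cs.IsReduced ω) :
    invf cs (π ω) = (cs.rightInvSeq ω).toFinset := by
  ext t
  rw [mem_invf cs, List.mem_toFinset]
  constructor
  · rintro ⟨hrefl, hsg⟩
    rw [sg_count] at hsg
    rcases Nat.even_or_odd (List.count t (cs.rightInvSeq ω)) with he | ho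
    · rw [he.neg_one_pow] at hsg
      exact absurd hsg (by decide)
    · rcases ho with ⟨c, hc⟩
      exact List.count_pos_iff.mp (by omega)
  · intro hmem
    refine ⟨cs.isReflection_of_mem_rightInvSeq ω hmem, ?_⟩
    rw [sg_count, List.nodup_iff_count_eq_one.mp hred.nodup_rightInvSeq t hmem, pow_one]

lemma card_invf (w : W) : (invf cs w).card = ℓ w := by
  obtain ⟨ω, hred, rfl⟩ := cs.exists_reduced_word' w
  rw [invf_eq_toFinset cs hred, List.toFinset_card_of_nodup hred.nodup_rightInvSeq,
    cs.length_rightInvSeq]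
  exact hred.symm

lemma eq_of_sg_eq : ∀ (n : ℕ) (a b : W), ℓ a = n →
    (∀ t : W, cs.IsReflection t → sg cs a t = sg cs b t) → a = b := by
  intro n
  induction n using Nat.strong_induction_on with
  | _ n ih =>
    intro a b hn hsg
    rcases eq_or_ne a 1 with rfl | ha
    · have hb : invf cs b = ∅ := by
        ext t
        rw [mem_invf cs]
        simp only [Finset.notMem_empty, iff_false, not_and]
        intro hrefl hneg
        have h1 := hsg t hrefl
        rw [sg_one, hneg] at h1
        exact absurd h1 (by decide)
      have h0 : ℓ (b : W) = 0 := by rw [← card_invf, hb]; rfl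
      exact (cs.length_eq_zero_iff.mp h0).symm
    · obtain ⟨i, hi⟩ := cs.exists_rightDescent_of_ne_one ha
      have hsa : sg cs a (σ i) = -1 :=
        (sg_eq_neg_one_iff cs (cs.isReflection_simple i) a).mpr hi
      have hsb : ℓ (b * σ i) < ℓ b := by
        refine (sg_eq_neg_one_iff cs (cs.isReflection_simple i) b).mp ?_
        rw [← hsg _ (cs.isReflection_simple i)]
        exact hsa
      have hstep : ∀ t : W, cs.IsReflection t →
          sg cs (a * σ i) t = sg cs (b * σ i) t := by
        intro t ht
        rw [sg_mul, sg_mul, hsg _ (ht.conj (σ i))]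
      have hlt : ℓ (a * σ i) < n := by
        have := hi
        unfold CoxeterSystem.IsRightDescent at this
        omega
      have := ih (ℓ (a * σ i)) hlt (a * σ i) (b * σ i) rfl hstep
      exact mul_right_cancel this

theorem main_case2 (w : W) (hw : w * w = 1)
    (hcomm : ∀ i : B, ℓ (σ i * w) < ℓ w → σ i * w = w * σ i) :
    ∃ J : Set B, w ∈ Subgroup.closure (cs.simple '' J) ∧
      (∀ u ∈ Subgroup.closure (cs.simple '' J), ℓ u ≤ ℓ w) ∧
      (∀ u ∈ Subgroup.closure (cs.simple '' J), u * w = w * u) := by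
  classical
  letI := Fintype.ofFinite W
  set J : Set B := {i | cs.IsLeftDescent w i} with hJdef
  set K : Subgroup W := Subgroup.closure (cs.simple '' J) with hKdef
  have hwinv : w⁻¹ = w := inv_eq_of_mul_eq_one_right hw
  -- w commutes with everything in K
  have hcentral : ∀ u ∈ K, u * w = w * u := by
    intro u hu
    induction hu using Subgroup.closure_induction with
    | mem x hx =>
      obtain ⟨i, hiJ, rfl⟩ := hx
      exact hcomm i hiJ
    | one => rw [one_mul, mul_one]
    | mul x y hx hy ihx ihy => rw [mul_assoc, ihy, ← mul_assoc, ihx, mul_assoc]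
    | inv x hx ihx =>
      have h1 : x⁻¹ * (x * w) * x⁻¹ = x⁻¹ * (w * x) * x⁻¹ := by rw [ihx]
      have h2 : x⁻¹ * (x * w) * x⁻¹ = w * x⁻¹ := by group
      have h3 : x⁻¹ * (w * x) * x⁻¹ = x⁻¹ * w := by group
      rw [h2, h3] at h1
      exact h1.symm
  have hwfix : ∀ t ∈ K, w * t * w⁻¹ = t := by
    intro t ht
    rw [hwinv, mul_assoc, hcentral t ht, ← mul_assoc, hw, one_mul]
  have hwfix' : ∀ t ∈ K, w⁻¹ * t * w = t := by
    intro t ht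
    rw [hwinv, mul_assoc, hcentral t ht, ← mul_assoc, hw, one_mul]
  -- words for elements of K
  have hKword : ∀ u ∈ K, ∃ δ : List B, (∀ b ∈ δ, b ∈ J) ∧ u = π δ := by
    intro u hu
    induction hu using Subgroup.closure_induction with
    | mem x hx =>
      obtain ⟨i, hiJ, rfl⟩ := hx
      exact ⟨[i], by simpa using hiJ, by simp [cs.wordProd_cons, cs.wordProd_nil]⟩
    | one => exact ⟨[], by simp, by simp [cs.wordProd_nil]⟩
    | mul x y hx hy ihx ihy =>
      obtain ⟨δ₁, h1, rfl⟩ := ihx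
      obtain ⟨δ₂, h2, rfl⟩ := ihy
      exact ⟨δ₁ ++ δ₂, by
        intro b hb
        rcases List.mem_append.mp hb with h | h
        exacts [h1 b h, h2 b h], (cs.wordProd_append δ₁ δ₂).symm⟩
    | inv x hx ihx =>
      obtain ⟨δ, h1, rfl⟩ := ihx
      exact ⟨δ.reverse, fun b hb => h1 b (List.mem_reverse.mp hb),
        (cs.wordProd_reverse δ).symm⟩
  have hπK : ∀ δ : List B, (∀ b ∈ δ, b ∈ J) → π δ ∈ K := by
    intro δ
    induction δ with
    | nil => intro _; rw [cs.wordProd_nil]; exact one_mem K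
    | cons i δ ih =>
      intro h
      rw [cs.wordProd_cons]
      exact mul_mem (Subgroup.subset_closure ⟨i, h i (by simp), rfl⟩)
        (ih fun b hb => h b (by simp [hb]))
  -- the set of reflections of the parabolic
  set TJ : Set W := {t | ∃ z ∈ K, ∃ j ∈ J, t = z * σ j * z⁻¹} with hTJdef
  have hTJrefl : ∀ t ∈ TJ, cs.IsReflection t := by
    rintro t ⟨z, hz, j, hj, rfl⟩
    exact ⟨z, j, rfl⟩
  have hTJK : ∀ t ∈ TJ, t ∈ K := by
    rintro t ⟨z, hz, j, hj, rfl⟩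
    exact mul_mem (mul_mem hz (Subgroup.subset_closure ⟨j, hj, rfl⟩)) (inv_mem hz)
  have hTJconj : ∀ u ∈ K, ∀ t ∈ TJ, u * t * u⁻¹ ∈ TJ := by
    rintro u hu t ⟨z, hz, j, hj, rfl⟩
    refine ⟨u * z, mul_mem hu hz, j, hj, ?_⟩
    rw [mul_inv_rev]
    group
  have hsimpleTJ : ∀ j ∈ J, σ j ∈ TJ := by
    intro j hj
    exact ⟨1, one_mem K, j, hj, by group⟩
  -- inversions of elements of K lie in TJ
  have hInvTJ : ∀ u ∈ K, ∀ t : W, sg cs u t = -1 → t ∈ TJ := by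
    intro u hu t hsgt
    obtain ⟨δ, hδJ, rfl⟩ := hKword u hu
    rw [sg_count] at hsgt
    have hmem : t ∈ cs.rightInvSeq δ := by
      rcases Nat.even_or_odd (List.count t (cs.rightInvSeq δ)) with he | ho
      · rw [he.neg_one_pow] at hsgt
        exact absurd hsgt (by decide)
      · rcases ho with ⟨c, hc⟩
        exact List.count_pos_iff.mp (by omega)
    obtain ⟨jj, hjj, hget⟩ := List.mem_iff_getElem.mp hmem
    have hjl : jj < δ.length := by
      rw [cs.length_rightInvSeq] at hjj
      exact hjj
    have hform := cs.getD_rightInvSeq δ jj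
    rw [List.getD_eq_getElem _ 1 hjj, hget] at hform
    rw [List.getElem?_eq_getElem hjl] at hform
    simp only [Option.map_some, Option.getD_some] at hform
    have hdropK : π (δ.drop (jj + 1)) ∈ K :=
      hπK _ (fun b hb => hδJ b (List.drop_subset _ _ hb))
    refine ⟨(π (δ.drop (jj + 1)))⁻¹, inv_mem hdropK, δ.get ⟨jj, hjl⟩,
      hδJ _ (List.get_mem δ ⟨jj, hjl⟩), ?_⟩
    rw [inv_inv]
    exact hform
  -- each j ∈ J is a right descent of w
  have hrdesc : ∀ i : B, ℓ (w * σ i) = ℓ (σ i * w) := by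
    intro i
    conv_lhs => rw [← cs.length_inv]
    rw [mul_inv_rev, hwinv, cs.inv_simple]
  have hdescB : ∀ j ∈ J, sg cs w (σ j) = -1 := by
    intro j hj
    refine (sg_eq_neg_one_iff cs (cs.isReflection_simple j) w).mpr ?_
    rw [hrdesc j]
    exact hj
  -- all reflections of TJ are inversions of w
  have hBword : ∀ δ : List B, (∀ b ∈ δ, b ∈ J) → ∀ j ∈ J,
      sg cs w (π δ * σ j * (π δ)⁻¹) = -1 := by
    intro δ
    induction δ with
    | nil =>
      intro _ j hj
      rw [cs.wordProd_nil]
      simpa using hdescB j hj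
    | cons m δ' ih =>
      intro hmem j hj
      have hmJ : m ∈ J := hmem m (by simp)
      have hδ'J : ∀ b ∈ δ', b ∈ J := fun b hb => hmem b (by simp [hb])
      set t' : W := π δ' * σ j * (π δ')⁻¹ with ht'def
      have iht' : sg cs w t' = -1 := ih hδ'J j hj
      have ht'TJ : t' ∈ TJ := ⟨π δ', hπK δ' hδ'J, j, hj, rfl⟩
      have ht'K : t' ∈ K := hTJK t' ht'TJ
      have htform : π (m :: δ') * σ j * (π (m :: δ'))⁻¹ = σ m * t' * σ m := by
        rw [cs.wordProd_cons, mul_inv_rev, cs.inv_simple, ht'def]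
        group
      rw [htform]
      have hwm : σ m * w = w * σ m := hcomm m hmJ
      have hw2 : w = σ m * (w * σ m) := by
        rw [← mul_assoc, hwm, mul_assoc, cs.simple_mul_simple_self, mul_one]
      have e1 : sg cs w (σ m * t' * σ m) =
          sg cs (σ m) ((w * σ m) * (σ m * t' * σ m) * (w * σ m)⁻¹) *
          sg cs (w * σ m) (σ m * t' * σ m) := by
        conv_lhs => rw [hw2]
        rw [sg_mul]
      have e2 : sg cs (w * σ m) (σ m * t' * σ m) =
          sg cs w (σ m * (σ m * t' * σ m) * (σ m)⁻¹) * sg cs (σ m) (σ m * t' * σ m) := by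
        rw [sg_mul]
      have e3 : σ m * (σ m * t' * σ m) * (σ m)⁻¹ = t' := by
        rw [cs.inv_simple]
        calc σ m * (σ m * t' * σ m) * σ m
            = (σ m * σ m) * t' * (σ m * σ m) := by group
          _ = t' := by rw [cs.simple_mul_simple_self, one_mul, mul_one]
      have e4 : (w * σ m) * (σ m * t' * σ m) * (w * σ m)⁻¹ = t' := by
        have h5 : (w * σ m) * (σ m * t' * σ m) * (w * σ m)⁻¹
            = w * ((σ m * (σ m * t' * σ m)) * (σ m)⁻¹) * w⁻¹ := by
          rw [mul_inv_rev, cs.inv_simple]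
          group
        rw [h5]
        have := e3
        rw [cs.inv_simple] at this ⊢
        rw [show σ m * (σ m * t' * σ m) * σ m = (σ m * (σ m * t' * σ m)) * σ m by group] at this
        rw [this]
        exact hwfix t' ht'K
      rw [e1, e2, e3, e4, iht']
      have hiff : (t' = σ m) ↔ (σ m * t' * σ m = σ m) := by
        constructor
        · intro h
          rw [h, cs.simple_mul_simple_self, one_mul]
        · intro h
          have := congrArg (fun x => σ m * x * σ m) h
          rw [conj_simple_simple] at this
          rw [this, cs.simple_mul_simple_self, one_mul]
      by_cases hcase : t' = σ m
      · rw [sg_simple, sg_simple, if_pos hcase, if_pos (hiff.mp hcase)]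
        decide
      · rw [sg_simple, sg_simple, if_neg hcase, if_neg (fun hc => hcase (hiff.mpr hc))]
        decide
  have hB : ∀ t ∈ TJ, sg cs w t = -1 := by
    rintro t ⟨z, hz, j, hj, rfl⟩
    obtain ⟨δ, hδJ, rfl⟩ := hKword z hz
    exact hBword δ hδJ j hj
  -- maximality
  have hmax : ∀ u ∈ K, ℓ u ≤ ℓ w := by
    intro u hu
    rw [← card_invf cs u, ← card_invf cs w]
    apply Finset.card_le_card
    intro t ht
    rw [mem_invf cs] at ht ⊢
    obtain ⟨htr, hts⟩ := ht
    exact ⟨htr, hB t (hInvTJ u hu t hts)⟩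
  -- a longest element of K
  have hKexists : ∃ u0 ∈ Finset.univ.filter (· ∈ K),
      ∀ x ∈ Finset.univ.filter (· ∈ K), ℓ x ≤ ℓ u0 := by
    obtain ⟨u0, hu0, hmax'⟩ := Finset.exists_max_image
      (Finset.univ.filter (· ∈ K)) (fun x => ℓ x) ⟨1, by simp [one_mem]⟩
    exact ⟨u0, hu0, hmax'⟩
  obtain ⟨u0, hu0mem, hu0max⟩ := hKexists
  have hu0K : u0 ∈ K := by simpa using hu0mem
  have hu0max' : ∀ x ∈ K, ℓ x ≤ ℓ u0 := fun x hx => hu0max x (by simpa using hx)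
  have hu0invK : u0⁻¹ ∈ K := inv_mem hu0K
  -- longest elements have all of TJ as inversions
  have hlongest : ∀ u ∈ K, (∀ x ∈ K, ℓ x ≤ ℓ u) → ∀ t ∈ TJ, sg cs u t = -1 := by
    intro u huK humax t ht
    rcases Int.units_eq_one_or (sg cs u t) with h1 | h1
    · exfalso
      have hne := (hTJrefl t ht).length_mul_left_ne u
      have hnlt : ¬ ℓ (u * t) < ℓ u := by
        intro hlt
        have h2 := (sg_eq_neg_one_iff cs (hTJrefl t ht) u).mpr hlt
        rw [h1] at h2
        exact absurd h2 (by decide)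
      have hmemK : u * t ∈ K := mul_mem huK (hTJK t ht)
      have := humax _ hmemK
      omega
    · exact h1
  have hInvu0 : ∀ t ∈ TJ, sg cs u0 t = -1 := hlongest u0 hu0K hu0max'
  have hInvu0inv : ∀ t ∈ TJ, sg cs u0⁻¹ t = -1 := by
    apply hlongest u0⁻¹ hu0invK
    intro x hx
    rw [cs.length_inv]
    exact hu0max' x hx
  -- u0 is an involution
  have hu0sq : u0 * u0 = 1 := by
    have hagree : ∀ t : W, cs.IsReflection t → sg cs u0⁻¹ t = sg cs u0 t := by
      intro t ht
      by_cases htTJ : t ∈ TJ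
      · rw [hInvu0 t htTJ, hInvu0inv t htTJ]
      · rcases Int.units_eq_one_or (sg cs u0⁻¹ t) with h1 | h1 <;>
          rcases Int.units_eq_one_or (sg cs u0 t) with h2 | h2
        · rw [h1, h2]
        · exact absurd (hInvTJ u0 hu0K t h2) htTJ
        · exact absurd (hInvTJ u0⁻¹ hu0invK t h1) htTJ
        · rw [h1, h2]
    have heq : u0⁻¹ = u0 := eq_of_sg_eq cs (ℓ (u0⁻¹)) u0⁻¹ u0 rfl hagree
    nth_rewrite 1 [← heq]
    exact inv_mul_cancel u0
  -- the complement v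
  set v : W := w * u0 with hvdef
  have hvK : w = u0 * v := by
    rw [hvdef, ← mul_assoc, hcentral u0 hu0K, mul_assoc, hu0sq, mul_one]
  rcases eq_or_ne v 1 with hv1 | hvne
  · -- v = 1 : w = u0 ∈ K, done
    have hwu0 : w = u0 := by rw [hvK, hv1, mul_one]
    refine ⟨J, ?_, hmax, hcentral⟩
    rw [hwu0]
    exact hu0K
  · exfalso
    obtain ⟨i, hi⟩ := cs.exists_rightDescent_of_ne_one hvne
    have hsgv : sg cs v (σ i) = -1 :=
      (sg_eq_neg_one_iff cs (cs.isReflection_simple i) v).mpr hi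
    have hsiTJ : σ i ∉ TJ := by
      intro hmem
      have h1 : sg cs v (σ i) = sg cs w (u0 * σ i * u0⁻¹) * sg cs u0 (σ i) := by
        rw [hvdef, sg_mul]
      rw [hB _ (hTJconj u0 hu0K _ hmem), hInvu0 _ hmem, hsgv] at h1
      exact absurd h1 (by decide)
    have hrTJ : v * σ i * v⁻¹ ∉ TJ := by
      intro hr
      apply hsiTJ
      have e : v⁻¹ * (v * σ i * v⁻¹) * v
          = u0⁻¹ * (w⁻¹ * (v * σ i * v⁻¹) * w) * u0 := by
        rw [hvdef, mul_inv_rev]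
        group
      have hvinvTJ : v⁻¹ * (v * σ i * v⁻¹) * v ∈ TJ := by
        rw [e, hwfix' _ (hTJK _ hr)]
        have := hTJconj u0⁻¹ hu0invK _ hr
        rwa [inv_inv] at this
      have e2 : v⁻¹ * (v * σ i * v⁻¹) * v = σ i := by group
      rwa [e2] at hvinvTJ
    have hsgu0r : sg cs u0 (v * σ i * v⁻¹) = 1 := by
      rcases Int.units_eq_one_or (sg cs u0 (v * σ i * v⁻¹)) with h1 | h1
      · exact h1
      · exact absurd (hInvTJ u0 hu0K _ h1) hrTJ
    have hsgw : sg cs w (σ i) = -1 := by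
      have h1 : sg cs w (σ i) = sg cs u0 (v * σ i * v⁻¹) * sg cs v (σ i) := by
        conv_lhs => rw [hvK]
        rw [sg_mul]
      rw [h1, hsgu0r, hsgv, one_mul]
    have hiJ : i ∈ J := by
      have hlt : ℓ (w * σ i) < ℓ w :=
        (sg_eq_neg_one_iff cs (cs.isReflection_simple i) w).mp hsgw
      show cs.IsLeftDescent w i
      unfold CoxeterSystem.IsLeftDescent
      rw [← hrdesc i]
      exact hlt
    exact hsiTJ (hsimpleTJ i hiJ)

end Finite

end
end CoxRich

/-- Let `w` be an involution in a (finite) Weyl group `W` with simple reflections `S`.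
Then either (i) there exists a simple reflection `s` with `ℓ(sw) < ℓ(w)` and `sw ≠ ws`,
or (ii) there is a subset `J ⊆ S` such that `w` is the longest element of the standard
parabolic subgroup `W_J` and `w` lies in the center of `W_J`. -/
theorem involution_descent_or_longest_central
    {B : Type*} {W : Type*} [Group W] [Finite W] {M : CoxeterMatrix B}
    (cs : CoxeterSystem M W) (w : W) (hw : w * w = 1) :
    (∃ i : B, cs.length (cs.simple i * w) < cs.length w ∧
        cs.simple i * w ≠ w * cs.simple i) ∨
    (∃ J : Set B,
      w ∈ Subgroup.closure (cs.simple '' J) ∧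
      (∀ u ∈ Subgroup.closure (cs.simple '' J), cs.length u ≤ cs.length w) ∧
      (∀ u ∈ Subgroup.closure (cs.simple '' J), u * w = w * u)) := by
  by_cases h : ∃ i : B, cs.length (cs.simple i * w) < cs.length w ∧
      cs.simple i * w ≠ w * cs.simple i
  · exact Or.inl h
  · right
    push_neg at h
    exact CoxRich.main_case2 cs w hw h
end

section
/- Let w be an involution in the Weyl group W of a root system R, and let R_w = {α ∈ R : w(α) = −α}. Then R_w spans the (−1)-eigenspace X_w of w acting on the ambient vector space X = ℝ ⊗ X(T). -/
open scoped RealInnerProductSpace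

variable {V : Type*} [NormedAddCommGroup V] [InnerProductSpace ℝ V] [FiniteDimensional ℝ V]

/-- The reflection in the hyperplane orthogonal to `α`. -/
noncomputable def wrefl (α : V) : V ≃ₗᵢ[ℝ] V := Submodule.reflection (ℝ ∙ α)ᗮ

/-- A (reduced) root system in a real inner product space. -/
structure IsRootSystem (R : Finset V) : Prop where
  ne_zero : (0 : V) ∉ R
  span_eq_top : Submodule.span ℝ (R : Set V) = ⊤
  reduced : ∀ α ∈ R, ∀ c : ℝ, c • α ∈ R → c = 1 ∨ c = -1
  refl_mem : ∀ α ∈ R, ∀ β ∈ R, wrefl α β ∈ R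
  pairing_int : ∀ α ∈ R, ∀ β ∈ R, ∃ n : ℤ, 2 * ⟪α, β⟫ / ⟪α, α⟫ = (n : ℝ)

/-- The Weyl group of a root system, as a group of linear isometries. -/
noncomputable def weylGroup (R : Finset V) : Subgroup (V ≃ₗᵢ[ℝ] V) :=
  Subgroup.closure (wrefl '' (R : Set V))

/-- A system of positive roots. -/
structure IsPositiveSystem (R Rpos : Finset V) : Prop where
  subset : Rpos ⊆ R
  mem_or_neg_mem : ∀ α ∈ R, α ∈ Rpos ∨ -α ∈ Rpos
  not_mem_and_neg_mem : ∀ α ∈ Rpos, -α ∉ Rpos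
  add_mem : ∀ α ∈ Rpos, ∀ β ∈ Rpos, α + β ∈ R → α + β ∈ Rpos

/-- A simple (indecomposable) positive root. -/
def IsSimpleRoot (Rpos : Finset V) (α : V) : Prop :=
  α ∈ Rpos ∧ ¬∃ β ∈ Rpos, ∃ γ ∈ Rpos, α = β + γ

/-- The length of `w`, i.e. the number of positive roots sent by `w` to negative roots. -/
noncomputable def len (Rpos : Finset V) (w : V ≃ₗᵢ[ℝ] V) : ℕ := by
  classical exact (Rpos.filter fun α => w α ∉ Rpos).card

/-- The coroot attached to a root. -/
noncomputable def cv (α : V) : V := (2 / ⟪α, α⟫) • α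

/-- The dominance order: `α ≤ α'` iff `α' - α` is a nonnegative combination of
positive roots. -/
def rle (Rpos : Finset V) (α α' : V) : Prop :=
  ∃ c : V → ℝ, (∀ β, 0 ≤ c β) ∧ α' - α = ∑ β ∈ Rpos, c β • β

/-- `α` is maximal in `S` for the dominance order. -/
def IsMaxIn (Rpos : Finset V) (S : Set V) (α : V) : Prop :=
  α ∈ S ∧ ∀ α' ∈ S, rle Rpos α α' → rle Rpos α' α

/-- The `n`-th layer of Kostant's cascade: the maximal positive roots among those
orthogonal to all roots of the previous layers. -/
def cascadeLevel (Rpos : Finset V) : ℕ → Set V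
  | n =>
    {α | IsMaxIn Rpos
      {β | β ∈ Rpos ∧ ∀ m, m < n → ∀ γ ∈ cascadeLevel Rpos m, ⟪γ, β⟫ = 0} α}
  termination_by n => n

/-- Kostant's cascade of orthogonal roots. -/
def cascade (Rpos : Finset V) : Set V := ⋃ n, cascadeLevel Rpos n

/-- The set of positive roots on which an involution `w` acts by `-1`. -/
noncomputable def posNegSet (Rpos : Finset V) (w : V ≃ₗᵢ[ℝ] V) : Finset V := by
  classical exact Rpos.filter fun α => w α = -α

/-- The element `r_w`: the sum of the coroots of the cascade of the root system
`R_w = {α ∈ R : w α = -α}`. -/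
noncomputable def rInv (Rpos : Finset V) (w : V ≃ₗᵢ[ℝ] V) : V :=
  ∑ α ∈ posNegSet Rpos w, Set.indicator (cascade (posNegSet Rpos w)) cv α

/-- The `(-1)`-eigenspace of a linear isometry `w` with `w ∘ w = 1`. -/
def negSpace (w : V ≃ₗᵢ[ℝ] V) : Submodule ℝ V where
  carrier := {x | w x = -x}
  add_mem' := by
    intro a b ha hb
    simp only [Set.mem_setOf_eq] at *
    rw [map_add, ha, hb]; abel
  zero_mem' := by simp
  smul_mem' := by
    intro c x hx
    simp only [Set.mem_setOf_eq] at *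
    rw [map_smul, hx, smul_neg]


section Aux
set_option linter.unusedSectionVars false

lemma wrefl_apply_self (α : V) : wrefl α α = -α :=
  Submodule.reflection_orthogonalComplement_singleton_eq_neg α

lemma wrefl_apply (α : V) (hα : α ≠ 0) (x : V) :
    wrefl α x = x - (2 * ⟪x, α⟫ / ⟪α, α⟫) • α := by
  have hαα : ⟪α, α⟫ ≠ 0 := inner_self_ne_zero.2 hα
  set c : ℝ := ⟪x, α⟫ / ⟪α, α⟫ with hc
  have hmem : x - c • α ∈ (ℝ ∙ α)ᗮ := by
    refine Submodule.mem_orthogonal_singleton_iff_inner_right.2 ?_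
    rw [inner_sub_right, real_inner_smul_right, hc, real_inner_comm α x]
    field_simp
    ring
  have h1 : wrefl α (x - c • α) = x - c • α := Submodule.reflection_mem_subspace_eq_self hmem
  have h2 : wrefl α (c • α) = c • (-α) := by
    rw [show wrefl α (c • α) = c • wrefl α α from (wrefl α).map_smul c α,
      wrefl_apply_self]
  have : wrefl α x = wrefl α ((x - c • α) + c • α) := by rw [sub_add_cancel]
  rw [(wrefl α).map_add, h1, h2] at this
  rw [this]
  rw [smul_neg]
  rw [show (2 * ⟪x, α⟫ / ⟪α, α⟫) = 2 * c by rw [hc]; ring]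
  module

lemma wrefl_wrefl (α : V) (x : V) : wrefl α (wrefl α x) = x :=
  Submodule.reflection_involutive _ x

lemma wrefl_mul_self (α : V) : wrefl α * wrefl α = 1 := by
  ext x; exact wrefl_wrefl α x

lemma wrefl_inv (α : V) : (wrefl α)⁻¹ = wrefl α :=
  inv_eq_of_mul_eq_one_left (wrefl_mul_self α)

lemma wrefl_neg (α : V) : wrefl (-α) = wrefl α := by
  unfold wrefl
  congr 1
  rw [show -α = (-1 : ℝ) • α by module, Submodule.span_singleton_smul_eq (by norm_num : IsUnit (-1:ℝ)) α]

lemma wrefl_conj (g : V ≃ₗᵢ[ℝ] V) (α : V) (hα : α ≠ 0) :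
    g * wrefl α * g⁻¹ = wrefl (g α) := by
  ext x
  have hga : g α ≠ 0 := by simpa using hα
  have key : ⟪g⁻¹ x, α⟫ = ⟪x, g α⟫ := by
    conv_rhs => rw [show x = g (g⁻¹ x) by simp]
    rw [LinearIsometryEquiv.inner_map_map]
  have hnorm : ⟪g α, g α⟫ = ⟪α, α⟫ := LinearIsometryEquiv.inner_map_map g α α
  show g (wrefl α (g⁻¹ x)) = wrefl (g α) x
  rw [wrefl_apply α hα, wrefl_apply (g α) hga, map_sub, LinearIsometryEquiv.map_smul, key, hnorm]
  simp

section RS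

lemma root_ne_zero {R : Finset V} (hR : IsRootSystem R) {α : V} (hα : α ∈ R) : α ≠ 0 :=
  fun h => hR.ne_zero (h ▸ hα)

lemma root_inner_self_pos {R : Finset V} (hR : IsRootSystem R) {α : V} (hα : α ∈ R) :
    0 < ⟪α, α⟫ := by
  have h0 : α ≠ 0 := root_ne_zero hR hα
  have : (0:ℝ) < ‖α‖ := norm_pos_iff.2 h0
  rw [real_inner_self_eq_norm_mul_norm]
  exact mul_pos this this

lemma neg_root_mem {R : Finset V} (hR : IsRootSystem R) {α : V} (hα : α ∈ R) : -α ∈ R := by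
  have := hR.refl_mem α hα α hα
  rwa [wrefl_apply_self] at this

lemma wrefl_mem_weylGroup {R : Finset V} {α : V} (hα : α ∈ R) : wrefl α ∈ weylGroup R :=
  Subgroup.subset_closure ⟨α, hα, rfl⟩

lemma weyl_root_mem {R : Finset V} (hR : IsRootSystem R) {w : V ≃ₗᵢ[ℝ] V}
    (hw : w ∈ weylGroup R) {α : V} (hα : α ∈ R) : w α ∈ R := by
  have key : (∀ β ∈ R, w β ∈ R) ∧ (∀ β ∈ R, w⁻¹ β ∈ R) := by
    refine Subgroup.closure_induction (k := wrefl '' (R : Set V))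
      (p := fun g _ => (∀ β ∈ R, g β ∈ R) ∧ (∀ β ∈ R, g⁻¹ β ∈ R)) ?_ ?_ ?_ ?_ hw
    · rintro x ⟨γ, hγ, rfl⟩
      refine ⟨fun β hβ => hR.refl_mem γ hγ β hβ, fun β hβ => ?_⟩
      rw [wrefl_inv]; exact hR.refl_mem γ hγ β hβ
    · simp
    · intro x y _ _ hx hy
      refine ⟨fun β hβ => ?_, fun β hβ => ?_⟩
      · exact hx.1 _ (hy.1 _ hβ)
      · rw [mul_inv_rev]
        show y⁻¹ (x⁻¹ β) ∈ R
        exact hy.2 _ (hx.2 _ hβ)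
    · intro x _ hx
      exact ⟨hx.2, by simpa using hx.1⟩
  exact key.1 α hα

/-- Two nonproportional roots with positive inner product differ by a root. -/
lemma root_sub_mem {R : Finset V} (hR : IsRootSystem R) {α β : V}
    (hα : α ∈ R) (hβ : β ∈ R) (hpos : 0 < ⟪α, β⟫) (hne : β ≠ α) : β - α ∈ R := by
  have hα0 : α ≠ 0 := root_ne_zero hR hα
  have hβ0 : β ≠ 0 := root_ne_zero hR hβ
  have hαα := root_inner_self_pos hR hα
  have hββ := root_inner_self_pos hR hβ
  have hnα : (0:ℝ) < ‖α‖ := norm_pos_iff.2 hα0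
  have hnβ : (0:ℝ) < ‖β‖ := norm_pos_iff.2 hβ0
  have hprop : ∀ c : ℝ, β ≠ c • α := by
    intro c hc
    rcases hR.reduced α hα c (hc ▸ hβ) with h1 | h1
    · rw [h1, one_smul] at hc; exact hne hc
    · rw [h1] at hc
      rw [hc] at hpos
      simp only [real_inner_smul_right] at hpos
      nlinarith
  have hcs : ⟪α, β⟫ * ⟪α, β⟫ < ⟪α, α⟫ * ⟪β, β⟫ := by
    have h1 : ⟪α, β⟫ < ‖α‖ * ‖β‖ := by
      refine inner_lt_norm_mul_iff_real.2 fun h => ?_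
      refine hprop (‖β‖ / ‖α‖) ?_
      have : (‖β‖ / ‖α‖) • α = β := by
        rw [div_eq_inv_mul, mul_smul, h, smul_smul, inv_mul_cancel₀ hnα.ne', one_smul]
      exact this.symm
    have h2 : -⟪α, β⟫ < ‖α‖ * ‖β‖ := by
      have := inner_lt_norm_mul_iff_real (x := α) (y := -β)
      rw [inner_neg_right, norm_neg] at this
      refine this.2 fun h => ?_
      refine hprop (-(‖β‖ / ‖α‖)) ?_
      have h' : ‖β‖ • α = -(‖α‖ • β) := by rw [h]; module
      have : (-(‖β‖ / ‖α‖)) • α = β := by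
        rw [neg_smul, div_eq_inv_mul, mul_smul, h', smul_neg, neg_neg, smul_smul,
          inv_mul_cancel₀ hnα.ne', one_smul]
      exact this.symm
    have e1 : ⟪α, α⟫ = ‖α‖ * ‖α‖ := real_inner_self_eq_norm_mul_norm α
    have e2 : ⟪β, β⟫ = ‖β‖ * ‖β‖ := real_inner_self_eq_norm_mul_norm β
    nlinarith [mul_pos hnα hnβ]
  obtain ⟨m, hm⟩ := hR.pairing_int α hα β hβ
  obtain ⟨n, hn0⟩ := hR.pairing_int β hβ α hα
  have hm2 : 2 * ⟪β, α⟫ / ⟪α, α⟫ = (m:ℝ) := by rw [real_inner_comm]; exact hm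
  have hn : 2 * ⟪α, β⟫ / ⟪β, β⟫ = (n:ℝ) := by rw [real_inner_comm]; exact hn0
  have hm1 : 1 ≤ m := by
    have : (0:ℝ) < m := by rw [← hm]; exact div_pos (by linarith) hαα
    exact_mod_cast this
  have hn1 : 1 ≤ n := by
    have : (0:ℝ) < n := by rw [← hn]; exact div_pos (by linarith) hββ
    exact_mod_cast this
  have hprod : m * n < 4 := by
    have : (m:ℝ) * n < 4 := by
      rw [← hm, ← hn, div_mul_div_comm, div_lt_iff₀ (by positivity)]
      nlinarith
    exact_mod_cast this
  have hcase : m = 1 ∨ n = 1 := by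
    by_contra hc
    push_neg at hc
    have h2m : 2 ≤ m := by omega
    have h2n : 2 ≤ n := by omega
    nlinarith
  rcases hcase with h | h
  · have := hR.refl_mem α hα β hβ
    rw [wrefl_apply α hα0, hm2, h] at this
    simpa using this
  · have := hR.refl_mem β hβ α hα
    rw [wrefl_apply β hβ0, hn, h] at this
    simp only [Int.cast_one, one_smul] at this
    have := neg_root_mem hR this
    simpa using this

lemma root_add_mem {R : Finset V} (hR : IsRootSystem R) {α β : V}
    (hα : α ∈ R) (hβ : β ∈ R) (hneg : ⟪α, β⟫ < 0) (hne : β ≠ -α) : α + β ∈ R := by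
  have h1 : 0 < ⟪α, -β⟫ := by rw [inner_neg_right]; linarith
  have h2 : -β ≠ α := fun h => hne (by rw [← h]; module)
  have := root_sub_mem hR hα (neg_root_mem hR hβ) h1 h2
  have := neg_root_mem hR this
  have h3 : -(-β - α) = α + β := by module
  rwa [h3] at this

end RS


section PosSystem

/-- A generic vector: one that is orthogonal to no root. -/
lemma exists_generic (R : Finset V) (h0 : (0:V) ∉ R) : ∃ t : V, ∀ α ∈ R, ⟪t, α⟫ ≠ 0 := by
  classical
  induction R using Finset.induction_on with
  | empty => exact ⟨0, by simp⟩
  | @insert a s ha ih =>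
    have h0s : (0:V) ∉ s := fun h => h0 (Finset.mem_insert_of_mem h)
    obtain ⟨u, hu⟩ := ih h0s
    have ha0 : a ≠ 0 := fun h => h0 (by rw [← h]; exact Finset.mem_insert_self a s)
    by_cases hta : ⟪u, a⟫ ≠ 0
    · by_cases hall : ∀ β ∈ s, ⟪u, β⟫ ≠ 0
      · exact ⟨u, fun α hα => by
          rcases Finset.mem_insert.1 hα with rfl | hα
          · exact hta
          · exact hall α hα⟩
      · exact ⟨u, fun α hα => by
          rcases Finset.mem_insert.1 hα with rfl | hα
          · exact hta
          · exact hu α hα⟩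
    · -- perturb u in the direction a
      set f : V → ℝ := fun β => if ⟪a, β⟫ = 0 then 1 else -⟪u, β⟫ / ⟪a, β⟫ with hf
      obtain ⟨ε, hε⟩ := Infinite.exists_notMem_finset (insert (0:ℝ) (s.image f))
      have hε0 : ε ≠ 0 := fun h => hε (by rw [h]; exact Finset.mem_insert_self _ _)
      refine ⟨u + ε • a, fun α hα => ?_⟩
      rcases Finset.mem_insert.1 hα with rfl | hα
      · push_neg at hta
        rw [inner_add_left, hta, real_inner_smul_left, zero_add]
        have : 0 < ⟪α, α⟫ := by
          rw [real_inner_self_eq_norm_mul_norm]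
          have := norm_pos_iff.2 ha0
          exact mul_pos this this
        exact mul_ne_zero hε0 this.ne'
      · rw [inner_add_left, real_inner_smul_left]
        by_cases hza : ⟪a, α⟫ = 0
        · rw [hza, mul_zero, add_zero]; exact hu α hα
        · intro hcon
          have : ε = f α := by
            rw [hf]; simp only [if_neg hza]
            field_simp
            linarith
          exact hε (Finset.mem_insert_of_mem (Finset.mem_image.2 ⟨α, hα, this.symm⟩))

/-- The positive roots w.r.t. a generic vector `t`. -/
noncomputable def posR (R : Finset V) (t : V) : Finset V :=
  @Finset.filter _ (fun α => 0 < ⟪t, α⟫) (Classical.decPred _) R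

lemma mem_posR {R : Finset V} {t α : V} : α ∈ posR R t ↔ α ∈ R ∧ 0 < ⟪t, α⟫ :=
  Finset.mem_filter

lemma posR_subset {R : Finset V} {t : V} : posR R t ⊆ R := Finset.filter_subset _ _

lemma neg_not_posR {R : Finset V} {t α : V} (h : α ∈ posR R t) : -α ∉ posR R t := by
  intro h'
  have h1 := (mem_posR.1 h).2
  have h2 := (mem_posR.1 h').2
  rw [inner_neg_right] at h2
  linarith

lemma root_pos_or_neg {R : Finset V} {t : V} (hR : IsRootSystem R)
    (ht : ∀ α ∈ R, ⟪t, α⟫ ≠ 0) {α : V} (hα : α ∈ R) : α ∈ posR R t ∨ -α ∈ posR R t := by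
  rcases lt_or_gt_of_ne (ht α hα) with h | h
  · right
    exact mem_posR.2 ⟨neg_root_mem hR hα, by rw [inner_neg_right]; linarith⟩
  · left
    exact mem_posR.2 ⟨hα, h⟩

lemma not_posR_neg {R : Finset V} {t : V} (hR : IsRootSystem R)
    (ht : ∀ α ∈ R, ⟪t, α⟫ ≠ 0) {α : V} (hα : α ∈ R) (h : α ∉ posR R t) : -α ∈ posR R t :=
  (root_pos_or_neg hR ht hα).resolve_left h

/-- The simple roots. -/
noncomputable def simples (R : Finset V) (t : V) : Finset V :=
  @Finset.filter _ (fun δ => IsSimpleRoot (posR R t) δ) (Classical.decPred _) (posR R t)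

lemma mem_simples {R : Finset V} {t δ : V} : δ ∈ simples R t ↔ IsSimpleRoot (posR R t) δ := by
  letI := Classical.decPred (fun δ : V => IsSimpleRoot (posR R t) δ)
  unfold simples
  rw [Finset.mem_filter]
  exact ⟨fun h => h.2, fun h => ⟨h.1, h⟩⟩

lemma simples_subset_posR {R : Finset V} {t : V} : simples R t ⊆ posR R t := by
  letI := Classical.decPred (fun δ : V => IsSimpleRoot (posR R t) δ)
  unfold simples
  exact Finset.filter_subset _ _

/-- Every positive root is an ℕ-linear combination of simple roots. -/
lemma simples_decomp {R : Finset V} {t : V} (hR : IsRootSystem R)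
    (ht : ∀ α ∈ R, ⟪t, α⟫ ≠ 0) :
    ∀ β ∈ posR R t, ∃ c : V → ℕ, β = ∑ v ∈ simples R t, (c v : ℝ) • v := by
  classical
  suffices H : ∀ k : ℕ, ∀ β ∈ posR R t,
      ((posR R t).filter fun γ => ⟪t, γ⟫ < ⟪t, β⟫).card ≤ k →
      ∃ c : V → ℕ, β = ∑ v ∈ simples R t, (c v : ℝ) • v by
    intro β hβ
    exact H _ β hβ le_rfl
  intro k
  induction k using Nat.strong_induction_on with
  | _ k IH =>
    intro β hβ hcard
    by_cases hs : IsSimpleRoot (posR R t) β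
    · refine ⟨fun v => if v = β then 1 else 0, ?_⟩
      rw [Finset.sum_eq_single β]
      · simp
      · intro v _ hv
        simp [hv]
      · intro h
        exact absurd (mem_simples.2 hs) h
    · have hβ' : β ∈ posR R t := hβ
      rw [IsSimpleRoot] at hs
      push_neg at hs
      obtain ⟨γ, hγ, δ, hδ, hsum⟩ := hs hβ'
      have htγ := (mem_posR.1 hγ).2
      have htδ := (mem_posR.1 hδ).2
      have htβγ : ⟪t, γ⟫ < ⟪t, β⟫ := by
        rw [hsum, inner_add_right]; linarith
      have htβδ : ⟪t, δ⟫ < ⟪t, β⟫ := by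
        rw [hsum, inner_add_right]; linarith
      have hmeas : ∀ ρ : V, ρ ∈ posR R t → ⟪t, ρ⟫ < ⟪t, β⟫ →
          ((posR R t).filter fun x => ⟪t, x⟫ < ⟪t, ρ⟫).card < k := by
        intro ρ hρ hρβ
        have hsub : ((posR R t).filter fun x => ⟪t, x⟫ < ⟪t, ρ⟫) ⊆
            ((posR R t).filter fun x => ⟪t, x⟫ < ⟪t, β⟫) := by
          intro x hx
          rw [Finset.mem_filter] at hx ⊢
          exact ⟨hx.1, lt_trans hx.2 hρβ⟩
        have hss : ((posR R t).filter fun x => ⟪t, x⟫ < ⟪t, ρ⟫) ⊂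
            ((posR R t).filter fun x => ⟪t, x⟫ < ⟪t, β⟫) := by
          refine (Finset.ssubset_iff_of_subset hsub).2 ⟨ρ, ?_, ?_⟩
          · rw [Finset.mem_filter]; exact ⟨hρ, hρβ⟩
          · rw [Finset.mem_filter]; simp
        calc ((posR R t).filter fun x => ⟪t, x⟫ < ⟪t, ρ⟫).card
            < ((posR R t).filter fun x => ⟪t, x⟫ < ⟪t, β⟫).card := Finset.card_lt_card hss
          _ ≤ k := hcard
      obtain ⟨cγ, hcγ⟩ := IH _ (hmeas γ hγ htβγ) γ hγ le_rfl
      obtain ⟨cδ, hcδ⟩ := IH _ (hmeas δ hδ htβδ) δ hδ le_rfl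
      refine ⟨fun v => cγ v + cδ v, ?_⟩
      rw [hsum, hcγ, hcδ, ← Finset.sum_add_distrib]
      congr 1
      ext v
      push_cast
      rw [add_smul]

/-- Distinct simple roots have nonpositive inner product. -/
lemma simples_inner_nonpos {R : Finset V} {t : V} (hR : IsRootSystem R)
    (ht : ∀ α ∈ R, ⟪t, α⟫ ≠ 0) {δ ε : V} (hδ : δ ∈ simples R t) (hε : ε ∈ simples R t)
    (hne : δ ≠ ε) : ⟪δ, ε⟫ ≤ 0 := by
  by_contra hcon
  push_neg at hcon
  have hδp := simples_subset_posR hδ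
  have hεp := simples_subset_posR hε
  have hδR := posR_subset hδp
  have hεR := posR_subset hεp
  have hsub := root_sub_mem hR hδR hεR hcon (Ne.symm hne)
  rcases root_pos_or_neg hR ht hsub with h | h
  · refine (mem_simples.1 hε).2 ⟨δ, hδp, ε - δ, h, by module⟩
  · have h' : δ - ε ∈ posR R t := by rwa [neg_sub] at h
    refine (mem_simples.1 hδ).2 ⟨ε, hεp, δ - ε, h', by module⟩

/-- Simple roots are "linearly independent": coefficients of a vanishing combination vanish. -/
lemma simples_coeff_zero {R : Finset V} {t : V} (hR : IsRootSystem R)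
    (ht : ∀ α ∈ R, ⟪t, α⟫ ≠ 0) (a : V → ℝ)
    (h : ∑ v ∈ simples R t, a v • v = 0) : ∀ v ∈ simples R t, a v = 0 := by
  classical
  set P := (simples R t).filter (fun v => 0 < a v) with hP
  set N := (simples R t).filter (fun v => a v < 0) with hN
  have hsplit : ∑ v ∈ P, a v • v + ∑ v ∈ (simples R t).filter (fun v => ¬ 0 < a v), a v • v
      = 0 := by rw [Finset.sum_filter_add_sum_filter_not]; exact h
  have hNsub : N ⊆ (simples R t).filter (fun v => ¬ 0 < a v) := by
    intro v hv
    rw [Finset.mem_filter] at hv ⊢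
    exact ⟨hv.1, by linarith [hv.2]⟩
  have hrest : ∑ v ∈ (simples R t).filter (fun v => ¬ 0 < a v), a v • v
      = ∑ v ∈ N, a v • v := by
    refine (Finset.sum_subset hNsub ?_).symm
    intro v hv hvN
    rw [Finset.mem_filter] at hv
    rw [hN, Finset.mem_filter] at hvN
    have : a v = 0 := by
      rcases lt_trichotomy (a v) 0 with h' | h' | h'
      · exact absurd ⟨hv.1, h'⟩ hvN
      · exact h'
      · exact absurd h' hv.2
    rw [this, zero_smul]
  have hu2 : ∑ v ∈ P, a v • v = ∑ v ∈ N, (-(a v)) • v := by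
    have h1 : ∑ v ∈ P, a v • v + ∑ v ∈ N, a v • v = 0 := by rw [← hrest]; exact hsplit
    have h2 := eq_neg_of_add_eq_zero_left h1
    rw [h2, ← Finset.sum_neg_distrib]
    congr 1; ext v; rw [neg_smul]
  have huu : ⟪∑ v ∈ P, a v • v, (∑ v ∈ P, a v • v : V)⟫ ≤ 0 := by
    nth_rewrite 2 [hu2]
    rw [sum_inner]
    refine Finset.sum_nonpos fun v hv => ?_
    rw [inner_sum]
    refine Finset.sum_nonpos fun w hw => ?_
    rw [real_inner_smul_left, real_inner_smul_right]
    rw [hP, Finset.mem_filter] at hv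
    rw [hN, Finset.mem_filter] at hw
    have hvw : v ≠ w := fun h => by rw [h] at hv; linarith [hv.2, hw.2]
    have := simples_inner_nonpos hR ht hv.1 hw.1 hvw
    have h1 : 0 < a v := hv.2
    have h2 : 0 < -(a w) := by linarith [hw.2]
    nlinarith [mul_nonneg (mul_nonneg h1.le h2.le) (neg_nonneg.2 this)]
  have hu0 : ∑ v ∈ P, a v • v = (0:V) := by
    have h1 := real_inner_self_nonneg (x := (∑ v ∈ P, a v • v : V))
    have h2 : ⟪∑ v ∈ P, a v • v, (∑ v ∈ P, a v • v : V)⟫ = 0 := le_antisymm huu h1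
    exact inner_self_eq_zero.1 h2
  have hPempty : ∀ v ∈ P, False := by
    intro v hv
    have htu : ⟪t, (∑ v ∈ P, a v • v : V)⟫ = 0 := by rw [hu0, inner_zero_right]
    rw [inner_sum] at htu
    have hpos : ∀ w ∈ P, 0 ≤ ⟪t, a w • w⟫ := by
      intro w hw
      rw [hP, Finset.mem_filter] at hw
      have h3 := (mem_posR.1 (simples_subset_posR hw.1)).2
      rw [real_inner_smul_right]
      exact mul_nonneg (le_of_lt hw.2) (le_of_lt h3)
    have hvpos : 0 < ⟪t, a v • v⟫ := by
      rw [hP, Finset.mem_filter] at hv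
      have := (mem_posR.1 (simples_subset_posR hv.1)).2
      rw [real_inner_smul_right]
      exact mul_pos hv.2 this
    have := Finset.sum_pos' hpos ⟨v, hv, hvpos⟩
    linarith [htu ▸ this]
  have hNempty : ∀ v ∈ N, False := by
    intro v hv
    have htu : ⟪t, ∑ w ∈ N, (-(a w)) • w⟫ = 0 := by
      rw [← hu2, hu0, inner_zero_right]
    rw [inner_sum] at htu
    have hpos : ∀ w ∈ N, 0 ≤ ⟪t, (-(a w)) • w⟫ := by
      intro w hw
      rw [hN, Finset.mem_filter] at hw
      have h3 := (mem_posR.1 (simples_subset_posR hw.1)).2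
      rw [real_inner_smul_right]
      have h4 : 0 ≤ -(a w) := by linarith [hw.2]
      exact mul_nonneg h4 (le_of_lt h3)
    have hvpos : 0 < ⟪t, (-(a v)) • v⟫ := by
      rw [hN, Finset.mem_filter] at hv
      have h2 := (mem_posR.1 (simples_subset_posR hv.1)).2
      rw [real_inner_smul_right]
      have : 0 < -(a v) := by linarith [hv.2]
      exact mul_pos this h2
    have := Finset.sum_pos' hpos ⟨v, hv, hvpos⟩
    linarith [htu ▸ this]
  intro v hv
  rcases lt_trichotomy (a v) 0 with h' | h' | h'
  · exact absurd (Finset.mem_filter.2 ⟨hv, h'⟩) (fun hh => hNempty v hh)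
  · exact h'
  · exact absurd (Finset.mem_filter.2 ⟨hv, h'⟩) (fun hh => hPempty v hh)

end PosSystem


section Perm

/-- A positive root proportional to a simple root equals it. -/
lemma posR_eq_of_prop {R : Finset V} {t : V} (hR : IsRootSystem R)
    {δ β : V} (hδ : δ ∈ posR R t) (hβ : β ∈ posR R t) (c : ℝ) (h : β = c • δ) : β = δ := by
  have hδR := posR_subset hδ
  rcases hR.reduced δ hδR c (h ▸ (posR_subset hβ)) with h1 | h1
  · rw [h1, one_smul] at h; exact h
  · exfalso
    rw [h1] at h
    have h2 := (mem_posR.1 hβ).2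
    have h3 := (mem_posR.1 hδ).2
    rw [h, real_inner_smul_right] at h2
    nlinarith

/-- The reflection in a simple root permutes the other positive roots. -/
lemma wrefl_simple_perm {R : Finset V} {t : V} (hR : IsRootSystem R)
    (ht : ∀ α ∈ R, ⟪t, α⟫ ≠ 0) {δ β : V} (hδ : δ ∈ simples R t) (hβ : β ∈ posR R t)
    (hne : β ≠ δ) : wrefl δ β ∈ posR R t ∧ wrefl δ β ≠ δ := by
  classical
  have hδp := simples_subset_posR hδ
  have hδR := posR_subset hδp
  have hβR := posR_subset hβ
  have hδ0 : δ ≠ 0 := root_ne_zero hR hδR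
  have hrefl : wrefl δ β ∈ R := hR.refl_mem δ hδR β hβR
  have hmain : wrefl δ β ∈ posR R t := by
    by_contra hcon
    have hneg : -(wrefl δ β) ∈ posR R t := not_posR_neg hR ht hrefl hcon
    set c : ℝ := 2 * ⟪β, δ⟫ / ⟪δ, δ⟫ with hc
    have hw : wrefl δ β = β - c • δ := wrefl_apply δ hδ0 β
    obtain ⟨m, hm⟩ := simples_decomp hR ht β hβ
    obtain ⟨n, hn⟩ := simples_decomp hR ht _ hneg
    have hnf : c • δ - β = ∑ v ∈ simples R t, (n v : ℝ) • v := by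
      rw [← hn, hw]; module
    set a : V → ℝ := fun v => ((m v : ℝ) + (n v : ℝ)) - (if v = δ then c else 0) with haof
    have hsum : ∑ v ∈ simples R t, a v • v = 0 := by
      have hδsum : ∑ v ∈ simples R t, (if v = δ then c else 0) • v = c • δ := by
        rw [Finset.sum_eq_single δ]
        · simp
        · intro v _ hv; simp [hv]
        · intro hcon'; exact absurd hδ hcon'
      have : ∑ v ∈ simples R t, a v • v
          = (∑ v ∈ simples R t, (m v : ℝ) • v) + (∑ v ∈ simples R t, (n v : ℝ) • v)
            - ∑ v ∈ simples R t, (if v = δ then c else 0) • v := by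
        rw [← Finset.sum_add_distrib, ← Finset.sum_sub_distrib]
        congr 1; ext v; rw [haof]; rw [sub_smul, add_smul]
      rw [this, hδsum, ← hm, ← hnf]
      module
    have hcoeff := simples_coeff_zero hR ht a hsum
    have hmzero : ∀ v ∈ simples R t, v ≠ δ → (m v : ℝ) = 0 := by
      intro v hv hvδ
      have := hcoeff v hv
      rw [haof] at this
      simp only [if_neg hvδ] at this
      have h1 : (0:ℝ) ≤ m v := Nat.cast_nonneg _
      have h2 : (0:ℝ) ≤ n v := Nat.cast_nonneg _
      linarith
    have hβprop : β = (m δ : ℝ) • δ := by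
      rw [hm, Finset.sum_eq_single δ]
      · intro v hv hvδ
        rw [hmzero v hv hvδ, zero_smul]
      · intro hcon'; exact absurd hδ hcon'
    exact hne (posR_eq_of_prop hR hδp hβ _ hβprop)
  refine ⟨hmain, fun hcon => ?_⟩
  have h1 : wrefl δ (wrefl δ β) = wrefl δ δ := by rw [hcon]
  rw [wrefl_wrefl, wrefl_apply_self] at h1
  have h2 := (mem_posR.1 hβ).2
  have h3 := (mem_posR.1 (simples_subset_posR hδ)).2
  rw [h1, inner_neg_right] at h2
  linarith

/-- If `w` sends all simple roots to positive roots, it preserves positive roots. -/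
lemma posR_stable_of_simples_pos {R : Finset V} {t : V} (hR : IsRootSystem R)
    (ht : ∀ α ∈ R, ⟪t, α⟫ ≠ 0) {w : V ≃ₗᵢ[ℝ] V} (hw : w ∈ weylGroup R)
    (hsimp : ∀ δ ∈ simples R t, w δ ∈ posR R t) :
    ∀ β ∈ posR R t, w β ∈ posR R t := by
  intro β hβ
  have hβR := posR_subset hβ
  have hwβR : w β ∈ R := weyl_root_mem hR hw hβR
  obtain ⟨m, hm⟩ := simples_decomp hR ht β hβ
  have hpos : 0 ≤ ⟪t, w β⟫ := by
    rw [hm, map_sum]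
    rw [inner_sum]
    refine Finset.sum_nonneg fun v hv => ?_
    rw [LinearIsometryEquiv.map_smul, real_inner_smul_right]
    have := (mem_posR.1 (hsimp v hv)).2
    exact mul_nonneg (Nat.cast_nonneg _) (le_of_lt this)
  refine mem_posR.2 ⟨hwβR, lt_of_le_of_ne hpos (Ne.symm (ht _ hwβR))⟩

end Perm


section Words

/-- `w` is a product of reflections in simple roots. -/
def HasWord (R : Finset V) (t : V) (w : V ≃ₗᵢ[ℝ] V) : Prop :=
  ∃ L : List V, (∀ δ ∈ L, δ ∈ simples R t) ∧ w = (L.map wrefl).prod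

lemma wordProd_inv (L : List V) :
    ((L.map wrefl).prod)⁻¹ = ((L.reverse.map wrefl).prod : V ≃ₗᵢ[ℝ] V) := by
  induction L with
  | nil => simp
  | cons γ L ih =>
    rw [List.map_cons, List.prod_cons, mul_inv_rev, ih, List.reverse_cons, List.map_append,
      List.prod_append, List.map_cons, List.prod_cons, List.map_nil, List.prod_nil, mul_one,
      wrefl_inv]

lemma hasWord_one {R : Finset V} {t : V} : HasWord R t 1 := ⟨[], by simp, by simp⟩

lemma hasWord_mul {R : Finset V} {t : V} {w w' : V ≃ₗᵢ[ℝ] V}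
    (h : HasWord R t w) (h' : HasWord R t w') : HasWord R t (w * w') := by
  obtain ⟨L, hL, rfl⟩ := h
  obtain ⟨M, hM, rfl⟩ := h'
  exact ⟨L ++ M, fun δ hδ => (List.mem_append.1 hδ).elim (hL δ) (hM δ),
    by rw [List.map_append, List.prod_append]⟩

lemma hasWord_inv {R : Finset V} {t : V} {w : V ≃ₗᵢ[ℝ] V}
    (h : HasWord R t w) : HasWord R t w⁻¹ := by
  obtain ⟨L, hL, rfl⟩ := h
  exact ⟨L.reverse, fun δ hδ => hL δ (List.mem_reverse.1 hδ), wordProd_inv L⟩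

/-- Every reflection in a root is a product of simple reflections. -/
lemma wrefl_hasWord {R : Finset V} {t : V} (hR : IsRootSystem R)
    (ht : ∀ α ∈ R, ⟪t, α⟫ ≠ 0) {β : V} (hβ : β ∈ R) : HasWord R t (wrefl β) := by
  classical
  -- reduce to positive roots
  suffices H : ∀ k : ℕ, ∀ β ∈ posR R t,
      ((posR R t).filter fun γ => ⟪t, γ⟫ < ⟪t, β⟫).card ≤ k → HasWord R t (wrefl β) by
    rcases root_pos_or_neg hR ht hβ with h | h
    · exact H _ β h le_rfl
    · have := H _ (-β) h le_rfl
      rwa [wrefl_neg] at this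
  intro k
  induction k using Nat.strong_induction_on with
  | _ k IH =>
    intro β hβp hcard
    by_cases hs : β ∈ simples R t
    · exact ⟨[β], by simpa using hs, by simp⟩
    · have hβR := posR_subset hβp
      have hββ := root_inner_self_pos hR hβR
      obtain ⟨m, hm⟩ := simples_decomp hR ht β hβp
      -- find a simple root with positive inner product with β
      have hex : ∃ v ∈ simples R t, 0 < ⟪β, v⟫ := by
        by_contra hcon
        push_neg at hcon
        have hineq : ⟪β, ∑ v ∈ simples R t, ((m v : ℝ) • v)⟫ ≤ 0 := by
          rw [inner_sum]
          refine Finset.sum_nonpos fun v hv => ?_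
          rw [real_inner_smul_right]
          exact mul_nonpos_of_nonneg_of_nonpos (Nat.cast_nonneg _) (hcon v hv)
        rw [← hm] at hineq
        linarith
      obtain ⟨δ, hδ, hβδ⟩ := hex
      have hδp := simples_subset_posR hδ
      have hδR := posR_subset hδp
      have hδ0 : δ ≠ 0 := root_ne_zero hR hδR
      have hδδ := root_inner_self_pos hR hδR
      have hβδne : β ≠ δ := fun h => hs (h ▸ hδ)
      obtain ⟨hγp, _⟩ := wrefl_simple_perm hR ht hδ hβp hβδne
      set γ := wrefl δ β with hγ
      have htγ : ⟪t, γ⟫ < ⟪t, β⟫ := by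
        rw [hγ, wrefl_apply δ hδ0, inner_sub_right, real_inner_smul_right]
        have h1 : 0 < 2 * ⟪β, δ⟫ / ⟪δ, δ⟫ := by positivity
        have h2 := (mem_posR.1 hδp).2
        nlinarith
      have hmeas : ((posR R t).filter fun x => ⟪t, x⟫ < ⟪t, γ⟫).card < k := by
        have hsub : ((posR R t).filter fun x => ⟪t, x⟫ < ⟪t, γ⟫) ⊆
            ((posR R t).filter fun x => ⟪t, x⟫ < ⟪t, β⟫) := by
          intro x hx
          rw [Finset.mem_filter] at hx ⊢
          exact ⟨hx.1, lt_trans hx.2 htγ⟩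
        have hss := (Finset.ssubset_iff_of_subset hsub).2
          ⟨γ, Finset.mem_filter.2 ⟨hγp, htγ⟩, by rw [Finset.mem_filter]; simp⟩
        calc _ < _ := Finset.card_lt_card hss
          _ ≤ k := hcard
      obtain ⟨L, hL, hLprod⟩ := IH _ hmeas γ hγp le_rfl
      refine ⟨δ :: (L ++ [δ]), ?_, ?_⟩
      · intro x hx
        rcases List.mem_cons.1 hx with rfl | hx
        · exact hδ
        · rcases List.mem_append.1 hx with hx | hx
          · exact hL x hx
          · rw [List.mem_singleton.1 hx]; exact hδ
      · have hβ0 : β ≠ 0 := root_ne_zero hR hβR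
        have hconj : wrefl δ * wrefl β * (wrefl δ)⁻¹ = wrefl γ := wrefl_conj (wrefl δ) β hβ0
        have h2 : wrefl β = (wrefl δ)⁻¹ * wrefl γ * wrefl δ := by
          rw [← hconj]; group
        rw [wrefl_inv] at h2
        rw [h2, hLprod]
        rw [List.map_cons, List.prod_cons, List.map_append, List.prod_append]
        simp [mul_assoc]

lemma weyl_hasWord {R : Finset V} {t : V} (hR : IsRootSystem R)
    (ht : ∀ α ∈ R, ⟪t, α⟫ ≠ 0) {w : V ≃ₗᵢ[ℝ] V} (hw : w ∈ weylGroup R) : HasWord R t w := by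
  refine Subgroup.closure_induction (k := wrefl '' (R : Set V))
    (p := fun g _ => HasWord R t g) ?_ hasWord_one (fun x y _ _ hx hy => hasWord_mul hx hy)
    (fun x _ hx => hasWord_inv hx) hw
  rintro x ⟨β, hβ, rfl⟩
  exact wrefl_hasWord hR ht (by exact_mod_cast hβ)

end Words


section Exchange

lemma exchange_lemma {R : Finset V} {t : V} (hR : IsRootSystem R)
    (ht : ∀ α ∈ R, ⟪t, α⟫ ≠ 0) :
    ∀ (L : List V), (∀ γ ∈ L, γ ∈ simples R t) → ∀ {δ : V}, δ ∈ simples R t →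
    ((L.map wrefl).prod) δ ∉ posR R t →
    ∃ M : List V, (∀ γ ∈ M, γ ∈ simples R t) ∧ M.length + 1 = L.length ∧
      (M.map wrefl).prod = (L.map wrefl).prod * wrefl δ := by
  intro L
  induction L with
  | nil =>
    intro _ δ hδ hneg
    exact absurd (by simpa using simples_subset_posR hδ) (by simpa using hneg)
  | cons γ L ih =>
    intro hL δ hδ hneg
    have hγ : γ ∈ simples R t := hL γ (List.mem_cons_self (a := γ) (l := L))
    have hLmem : ∀ x ∈ L, x ∈ simples R t := fun x hx => hL x (List.mem_cons_of_mem γ hx)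
    have hδ0 : δ ≠ 0 := root_ne_zero hR (posR_subset (simples_subset_posR hδ))
    have hprodcons : ((γ :: L).map wrefl).prod = wrefl γ * (L.map wrefl).prod := by
      rw [List.map_cons, List.prod_cons]
    by_cases h : ((L.map wrefl).prod) δ ∈ posR R t
    · -- the sign change happens at γ
      have hsign : wrefl γ (((L.map wrefl).prod) δ) ∉ posR R t := by
        intro hcon
        apply hneg
        rw [hprodcons]
        exact hcon
      have heq : ((L.map wrefl).prod) δ = γ := by
        by_contra hne
        exact hsign (wrefl_simple_perm hR ht hγ h hne).1
      have hconj : (L.map wrefl).prod * wrefl δ * ((L.map wrefl).prod)⁻¹ = wrefl γ := by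
        rw [← heq]
        exact wrefl_conj _ δ hδ0
      refine ⟨L, hLmem, by simp, ?_⟩
      rw [hprodcons, ← hconj]
      group
      rw [mul_assoc, wrefl_mul_self, mul_one]
    · obtain ⟨M, hM, hlen, hprod⟩ := ih hLmem hδ h
      refine ⟨γ :: M, ?_, by simp [← hlen], ?_⟩
      · intro x hx
        rcases List.mem_cons.1 hx with rfl | hx
        · exact hγ
        · exact hM x hx
      · rw [List.map_cons, List.prod_cons, hprod, hprodcons, mul_assoc]

lemma exists_neg_simple_aux {R : Finset V} {t : V} (hR : IsRootSystem R)
    (ht : ∀ α ∈ R, ⟪t, α⟫ ≠ 0) :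
    ∀ k : ℕ, ∀ w : V ≃ₗᵢ[ℝ] V, ∀ L : List V,
    (∀ γ ∈ L, γ ∈ simples R t) → w = (L.map wrefl).prod → L.length ≤ k → w ≠ 1 →
    ∃ δ ∈ simples R t, w δ ∉ posR R t := by
  intro k
  induction k using Nat.strong_induction_on with
  | _ k IH =>
    intro w L hL hw hlen hne
    by_contra hcon
    push_neg at hcon
    rcases List.eq_nil_or_concat' L with rfl | ⟨L', γ, rfl⟩
    · exact hne (by simpa using hw)
    · have hγ : γ ∈ simples R t := hL γ (by simp)
      have hL' : ∀ x ∈ L', x ∈ simples R t := fun x hx => hL x (by simp [hx])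
      have hw2 : w = (L'.map wrefl).prod * wrefl γ := by
        rw [hw, List.map_append, List.prod_append]
        simp
      have hwγpos : w γ ∈ posR R t := hcon γ hγ
      have huγ : ((L'.map wrefl).prod) γ = -(w γ) := by
        have : w γ = ((L'.map wrefl).prod) (wrefl γ γ) := by rw [hw2]; rfl
        rw [wrefl_apply_self, map_neg] at this
        rw [this, neg_neg]
      have huneg : ((L'.map wrefl).prod) γ ∉ posR R t := by
        rw [huγ]
        exact neg_not_posR hwγpos
      obtain ⟨M, hM, hlen2, hprod⟩ := exchange_lemma hR ht L' hL' hγ huneg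
      have hwM : w = (M.map wrefl).prod := by rw [hprod, ← hw2]
      have hlen3 : M.length < k := by
        have h1 : L'.length + 1 = (L' ++ [γ]).length := by simp
        omega
      obtain ⟨δ, hδ, hbad⟩ := IH M.length hlen3 w M hM hwM le_rfl hne
      exact hbad (hcon δ hδ)

lemma weyl_exists_neg_simple {R : Finset V} {t : V} (hR : IsRootSystem R)
    (ht : ∀ α ∈ R, ⟪t, α⟫ ≠ 0) {w : V ≃ₗᵢ[ℝ] V} (hw : w ∈ weylGroup R) (hne : w ≠ 1) :
    ∃ δ ∈ simples R t, w δ ∉ posR R t := by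
  obtain ⟨L, hL, hprod⟩ := weyl_hasWord hR ht hw
  exact exists_neg_simple_aux hR ht L.length w L hL hprod le_rfl hne

end Exchange


section Counting

/-- The set of inversions of `w`. -/
noncomputable def invSet (R : Finset V) (t : V) (w : V ≃ₗᵢ[ℝ] V) : Finset V :=
  @Finset.filter _ (fun β => w β ∉ posR R t) (Classical.decPred _) (posR R t)

lemma mem_invSet {R : Finset V} {t : V} {w : V ≃ₗᵢ[ℝ] V} {β : V} :
    β ∈ invSet R t w ↔ β ∈ posR R t ∧ w β ∉ posR R t := by
  letI := Classical.decPred (fun β : V => w β ∉ posR R t)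
  unfold invSet
  exact Finset.mem_filter

lemma winv_apply {w : V ≃ₗᵢ[ℝ] V} (hw2 : w * w = 1) (x : V) : w (w x) = x := by
  have : (w * w) x = (1 : V ≃ₗᵢ[ℝ] V) x := by rw [hw2]
  simpa using this

/-- Multiplying by a simple reflection that is an inversion decreases the count by one. -/
lemma nInv_refl_mul {R : Finset V} {t : V} (hR : IsRootSystem R)
    (ht : ∀ α ∈ R, ⟪t, α⟫ ≠ 0) {w : V ≃ₗᵢ[ℝ] V} (hst : ∀ α ∈ R, w α ∈ R)
    (hw2 : w * w = 1) {δ : V} (hδ : δ ∈ simples R t) (hδw : w δ = -δ) :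
    (invSet R t (wrefl δ * w)).card + 1 = (invSet R t w).card := by
  classical
  have hδp := simples_subset_posR hδ
  have hδR := posR_subset hδp
  have hBA : invSet R t (wrefl δ * w) = (invSet R t w).erase δ := by
    ext β
    rw [mem_invSet, Finset.mem_erase, mem_invSet]
    by_cases hβδ : β = δ
    · subst hβδ
      constructor
      · rintro ⟨h1, h2⟩
        exfalso
        apply h2
        show wrefl β (w β) ∈ posR R t
        rw [hδw, map_neg, wrefl_apply_self, neg_neg]
        exact h1
      · rintro ⟨h1, _⟩
        exact absurd rfl h1
    · constructor
      · rintro ⟨h1, h2⟩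
        refine ⟨hβδ, h1, fun hcon => ?_⟩
        -- w β ∈ posR; then wrefl δ (w β) ∈ posR unless w β = δ
        have hwββ : w β ≠ δ := by
          intro h
          have : β = w δ := by rw [← h, winv_apply hw2]
          rw [hδw] at this
          exact neg_not_posR hδp (this ▸ h1)
        exact h2 ((wrefl_simple_perm hR ht hδ hcon hwββ).1)
      · rintro ⟨hβδ', h1, h2⟩
        refine ⟨h1, fun hcon => ?_⟩
        have hwβR : w β ∈ R := hst β (posR_subset h1)
        have hneg : -(w β) ∈ posR R t := not_posR_neg hR ht hwβR h2
        have hnegδ : -(w β) ≠ δ := by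
          intro h
          have hh : w β = -δ := by rw [← h]; module
          have : β = w (-δ) := by rw [← hh, winv_apply hw2]
          rw [map_neg, hδw, neg_neg] at this
          exact hβδ' this
        have := (wrefl_simple_perm hR ht hδ hneg hnegδ).1
        apply neg_not_posR this
        show -(wrefl δ (-(w β))) ∈ posR R t
        rw [map_neg, neg_neg]
        exact hcon
  rw [hBA]
  refine Finset.card_erase_add_one (mem_invSet.2 ⟨hδp, ?_⟩)
  rw [hδw]
  exact neg_not_posR hδp

/-- Conjugating by a simple reflection that is a (non `-δ`) inversion decreases the count by 2. -/
lemma nInv_refl_conj {R : Finset V} {t : V} (hR : IsRootSystem R)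
    (ht : ∀ α ∈ R, ⟪t, α⟫ ≠ 0) {w : V ≃ₗᵢ[ℝ] V} (hst : ∀ α ∈ R, w α ∈ R)
    (hw2 : w * w = 1) {δ : V} (hδ : δ ∈ simples R t) (hδw : w δ ∉ posR R t)
    (hδw2 : w δ ≠ -δ) :
    (invSet R t (wrefl δ * w * wrefl δ)).card + 2 = (invSet R t w).card := by
  classical
  have hδp := simples_subset_posR hδ
  have hδR := posR_subset hδp
  have hwδR : w δ ∈ R := hst δ hδR
  have hnwδ : -(w δ) ∈ posR R t := not_posR_neg hR ht hwδR hδw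
  have hnwδδ : -(w δ) ≠ δ := fun h => hδw2 (neg_eq_iff_eq_neg.1 h)
  set S := ((invSet R t w).erase δ).erase (-(w δ)) with hS
  have hchar : ∀ x : V, x ∈ invSet R t (wrefl δ * w * wrefl δ) ↔ wrefl δ x ∈ S := by
    intro x
    rw [mem_invSet, hS, Finset.mem_erase, Finset.mem_erase, mem_invSet]
    have happ : (wrefl δ * w * wrefl δ) x = wrefl δ (w (wrefl δ x)) := rfl
    constructor
    · rintro ⟨h1, h2⟩
      rw [happ] at h2
      -- first, x ≠ δ
      have hxδ : x ≠ δ := by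
        intro h
        subst h
        apply h2
        have e1 : wrefl x x = -x := wrefl_apply_self x
        rw [e1, map_neg]
        have : -(w x) ≠ x := fun hh => hnwδδ hh
        have h3 : wrefl x (-(w x)) ∈ posR R t := (wrefl_simple_perm hR ht hδ hnwδ this).1
        show wrefl x (-(w x)) ∈ posR R t
        exact h3
      obtain ⟨hγp, hγδ⟩ := wrefl_simple_perm hR ht hδ h1 hxδ
      set γ := wrefl δ x with hγ
      have hγR : γ ∈ R := posR_subset hγp
      have hwγ : w γ ∉ posR R t := by
        intro hcon
        have hwγδ : w γ ≠ δ := by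
          intro h
          have : γ = w δ := by rw [← h, winv_apply hw2]
          rw [this] at hγp
          exact hδw hγp
        exact h2 ((wrefl_simple_perm hR ht hδ hcon hwγδ).1)
      have hγnwδ : γ ≠ -(w δ) := by
        intro h
        apply h2
        have : w γ = -δ := by
          rw [h, map_neg, winv_apply hw2]
        rw [this, map_neg, wrefl_apply_self, neg_neg]
        exact hδp
      exact ⟨hγnwδ, hγδ, hγp, hwγ⟩
    · rintro ⟨hγnwδ, hγδ, hγp, hwγ⟩
      set γ := wrefl δ x with hγ
      have hγR : γ ∈ R := posR_subset hγp
      have hx : x = wrefl δ γ := by rw [hγ, wrefl_wrefl]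
      have hxp : x ∈ posR R t := by
        rw [hx]
        exact (wrefl_simple_perm hR ht hδ hγp hγδ).1
      refine ⟨hxp, ?_⟩
      rw [happ]
      have hwγR : w γ ∈ R := hst γ hγR
      have hneg : -(w γ) ∈ posR R t := not_posR_neg hR ht hwγR hwγ
      have hnegδ : -(w γ) ≠ δ := by
        intro h
        have h1 : w γ = -δ := by rw [← h]; module
        have : γ = w (-δ) := by rw [← h1, winv_apply hw2]
        rw [map_neg] at this
        exact hγnwδ this
      have := (wrefl_simple_perm hR ht hδ hneg hnegδ).1
      intro hcon
      apply neg_not_posR this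
      show -(wrefl δ (-(w γ))) ∈ posR R t
      rw [map_neg, neg_neg]
      exact hcon
  have himg : invSet R t (wrefl δ * w * wrefl δ) = S.image (wrefl δ) := by
    ext x
    constructor
    · intro hx
      refine Finset.mem_image.2 ⟨wrefl δ x, (hchar x).1 hx, wrefl_wrefl δ x⟩
    · intro hx
      obtain ⟨y, hy, hyx⟩ := Finset.mem_image.1 hx
      refine (hchar x).2 ?_
      rw [← hyx, wrefl_wrefl]
      exact hy
  have hinj : Function.Injective (wrefl δ : V → V) := (wrefl δ).injective
  rw [himg, Finset.card_image_of_injective _ hinj]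
  have h1 : S.card + 1 = ((invSet R t w).erase δ).card :=
    Finset.card_erase_add_one (Finset.mem_erase.2 ⟨hnwδδ, mem_invSet.2 ⟨hnwδ, by
      rw [map_neg, winv_apply hw2]
      intro hcon
      exact neg_not_posR hcon (by rwa [neg_neg])⟩⟩)
  have h2 : ((invSet R t w).erase δ).card + 1 = (invSet R t w).card :=
    Finset.card_erase_add_one (mem_invSet.2 ⟨hδp, hδw⟩)
  omega

end Counting


section Main

/-- Characterization of the `-1`-eigenspace of `wrefl δ * w` when `w δ = -δ`. -/
lemma reflMul_neg_iff {w : V ≃ₗᵢ[ℝ] V} (hw2 : w * w = 1) {δ : V} (hδ0 : δ ≠ 0)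
    (hδw : w δ = -δ) (x : V) :
    (wrefl δ * w) x = -x ↔ (w x = -x ∧ ⟪x, δ⟫ = 0) := by
  have hδδ : ⟪δ, δ⟫ ≠ 0 := inner_self_ne_zero.2 hδ0
  constructor
  · intro h
    have happ : wrefl δ (w x) = -x := h
    have hwx : w x = -(wrefl δ x) := by
      have : wrefl δ (wrefl δ (w x)) = wrefl δ (-x) := by rw [happ]
      rw [wrefl_wrefl, map_neg] at this
      exact this
    have hinner : ⟪x, δ⟫ = 0 := by
      have e1 : ⟪w x, δ⟫ = -⟪x, δ⟫ := by
        have := LinearIsometryEquiv.inner_map_map w x δ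
        rw [hδw, inner_neg_right] at this
        linarith [this]
      have e2 : ⟪w x, δ⟫ = ⟪x, δ⟫ := by
        rw [hwx, wrefl_apply δ hδ0, inner_neg_left, inner_sub_left, real_inner_smul_left]
        field_simp
        ring
      linarith [e1, e2]
    have hsx : wrefl δ x = x := by
      rw [wrefl_apply δ hδ0, hinner]
      simp
    refine ⟨?_, hinner⟩
    rw [hwx, hsx]
  · rintro ⟨h1, h2⟩
    have hsx : wrefl δ x = x := by
      rw [wrefl_apply δ hδ0, h2]
      simp
    show wrefl δ (w x) = -x
    rw [h1, map_neg, hsx]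

lemma negSpace_le_span_aux {R : Finset V} {t : V} (hR : IsRootSystem R)
    (ht : ∀ α ∈ R, ⟪t, α⟫ ≠ 0) :
    ∀ k : ℕ, ∀ w : V ≃ₗᵢ[ℝ] V, w ∈ weylGroup R → w * w = 1 →
    (invSet R t w).card ≤ k → ∀ x, w x = -x →
    x ∈ Submodule.span ℝ {α : V | α ∈ R ∧ w α = -α} := by
  intro k
  induction k using Nat.strong_induction_on with
  | _ k IH =>
    intro w hw hw2 hcard x hx
    by_cases hw1 : w = 1
    · have : x = -x := by rw [← hx, hw1]; rfl
      have hx0 : x = 0 := by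
        have : x + x = 0 := by nth_rewrite 2 [this]; simp
        have h2 : (2:ℝ) • x = 0 := by rw [two_smul]; exact this
        have := smul_eq_zero.1 h2
        simpa using this
      rw [hx0]
      exact Submodule.zero_mem _
    · obtain ⟨δ, hδ, hδw⟩ := weyl_exists_neg_simple hR ht hw hw1
      have hδp := simples_subset_posR hδ
      have hδR := posR_subset hδp
      have hδ0 : δ ≠ 0 := root_ne_zero hR hδR
      have hst : ∀ α ∈ R, w α ∈ R := fun α hα => weyl_root_mem hR hw hα
      have hwinv : w⁻¹ = w := inv_eq_of_mul_eq_one_right hw2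
      by_cases hcase : w δ = -δ
      · -- rank reduction: w' = wrefl δ * w
        set w' := wrefl δ * w with hw'def
        have hw' : w' ∈ weylGroup R := mul_mem (wrefl_mem_weylGroup hδR) hw
        have hw'2 : w' * w' = 1 := by
          have hconj : w * wrefl δ * w⁻¹ = wrefl (w δ) := wrefl_conj w δ hδ0
          rw [hcase, wrefl_neg, hwinv] at hconj
          have h1 : (wrefl δ * w) * (wrefl δ * w) = wrefl δ * (w * wrefl δ * w) := by group
          rw [hw'def, h1, hconj, wrefl_mul_self]
        have hcount := nInv_refl_mul hR ht hst hw2 hδ hcase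
        rw [← hw'def] at hcount
        have hk1 : 1 ≤ k := by omega
        have hcard' : (invSet R t w').card ≤ k - 1 := by omega
        set c : ℝ := ⟪x, δ⟫ / ⟪δ, δ⟫ with hc
        set x' : V := x - c • δ with hx'def
        have hδδ : ⟪δ, δ⟫ ≠ 0 := inner_self_ne_zero.2 hδ0
        have hwx' : w x' = -x' := by
          rw [hx'def, map_sub, LinearIsometryEquiv.map_smul, hx, hcase]
          module
        have hx'δ : ⟪x', δ⟫ = 0 := by
          rw [hx'def, inner_sub_left, real_inner_smul_left, hc]
          field_simp
          ring
        have hw'x' : w' x' = -x' :=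
          (reflMul_neg_iff hw2 hδ0 hcase x').2 ⟨hwx', hx'δ⟩
        have hx'span := IH (k-1) (by omega) w' hw' hw'2 hcard' x' hw'x'
        have hsub : {α : V | α ∈ R ∧ w' α = -α} ⊆ {α : V | α ∈ R ∧ w α = -α} := by
          rintro α ⟨hα1, hα2⟩
          exact ⟨hα1, ((reflMul_neg_iff hw2 hδ0 hcase α).1 hα2).1⟩
        have hx'span2 := Submodule.span_mono hsub hx'span
        have hδspan : δ ∈ Submodule.span ℝ {α : V | α ∈ R ∧ w α = -α} :=
          Submodule.subset_span ⟨hδR, hcase⟩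
        have : x = x' + c • δ := by rw [hx'def]; module
        rw [this]
        exact Submodule.add_mem _ hx'span2 (Submodule.smul_mem _ c hδspan)
      · -- conjugation: w' = wrefl δ * w * wrefl δ
        set w' := wrefl δ * w * wrefl δ with hw'def
        have hw' : w' ∈ weylGroup R :=
          mul_mem (mul_mem (wrefl_mem_weylGroup hδR) hw) (wrefl_mem_weylGroup hδR)
        have hw'2 : w' * w' = 1 := by
          have h1 : (wrefl δ * w * wrefl δ) * (wrefl δ * w * wrefl δ)
              = wrefl δ * w * (wrefl δ * wrefl δ) * w * wrefl δ := by group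
          rw [hw'def, h1, wrefl_mul_self, mul_one]
          have h2 : wrefl δ * w * w * wrefl δ = wrefl δ * (w * w) * wrefl δ := by group
          rw [h2, hw2, mul_one, wrefl_mul_self]
        have hcount := nInv_refl_conj hR ht hst hw2 hδ hδw hcase
        rw [← hw'def] at hcount
        have hcard' : (invSet R t w').card < k := by omega
        set x' : V := wrefl δ x with hx'def
        have hw'x' : w' x' = -x' := by
          show wrefl δ (w (wrefl δ (wrefl δ x))) = -(wrefl δ x)
          rw [wrefl_wrefl, hx, map_neg]
        have hx'span := IH _ hcard' w' hw' hw'2 le_rfl x' hw'x'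
        have hsub : (fun v => wrefl δ v) '' {α : V | α ∈ R ∧ w' α = -α}
            ⊆ {α : V | α ∈ R ∧ w α = -α} := by
          rintro β ⟨α, ⟨hα1, hα2⟩, rfl⟩
          refine ⟨hR.refl_mem δ hδR α hα1, ?_⟩
          have h3 : wrefl δ (w (wrefl δ α)) = -α := hα2
          have h4 : wrefl δ (wrefl δ (w (wrefl δ α))) = wrefl δ (-α) := by rw [h3]
          rw [wrefl_wrefl, map_neg] at h4
          exact h4
        set f : V →ₗ[ℝ] V := ((wrefl δ).toLinearEquiv : V ≃ₗ[ℝ] V).toLinearMap with hf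
        have hmap : f x' ∈ Submodule.map f (Submodule.span ℝ {α : V | α ∈ R ∧ w' α = -α}) :=
          Submodule.mem_map_of_mem hx'span
        rw [Submodule.map_span] at hmap
        have hfx : f x' = x := by
          show wrefl δ (wrefl δ x) = x
          rw [wrefl_wrefl]
        rw [hfx] at hmap
        have himgeq : f '' {α : V | α ∈ R ∧ w' α = -α}
            = (fun v => wrefl δ v) '' {α : V | α ∈ R ∧ w' α = -α} := rfl
        rw [himgeq] at hmap
        exact Submodule.span_mono hsub hmap

end Main

end Aux

/-- For an involution `w` in the Weyl group, the roots `R_w = {α ∈ R : w α = -α}` span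
the `(-1)`-eigenspace `X_w` of `w`. -/
theorem span_negRoots_eq_negSpace
    {R : Finset V} (hR : IsRootSystem R)
    (w : V ≃ₗᵢ[ℝ] V) (hw : w ∈ weylGroup R) (hw2 : w * w = 1) :
    Submodule.span ℝ {α : V | α ∈ R ∧ w α = -α} = negSpace w := by
  classical
  obtain ⟨t, ht⟩ := exists_generic R hR.ne_zero
  apply le_antisymm
  · refine Submodule.span_le.2 fun α hα => ?_
    exact hα.2
  · intro x hx
    exact negSpace_le_span_aux hR ht (invSet R t w).card w hw hw2 le_rfl x hx
end
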